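/- The Heisenberg double H(O(H)) of a finite-dimensional Hopf algebra H acts faithfully on H^* via \psi \triangleright \varphi = \psi\varphi and h \triangleright \varphi = \varphi(? h), and consequently H(O(H)) is isomorphic as an algebra to End(H^*), the full matrix algebra of linear endomorphisms of H^*. -/

import Mathlib

open scoped TensorProduct
open TensorProduct

variable {k A : Type} [Field k] [Ring A] [HopfAlgebra k A]

/-- Convolution product on the dual Hopf algebra `H* = O(H)`. -/
noncomputable def conv (φ ψ : Module.Dual k A) : Module.Dual k A :=
  (LinearMap.mul' k k) ∘ₗ (TensorProduct.map φ ψ) ∘ₗ (Coalgebra.comul (R := k))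

lemma conv_add_left (φ φ' ψ : Module.Dual k A) :
    conv (φ + φ') ψ = conv φ ψ + conv φ' ψ := by
  simp [conv, TensorProduct.map_add_left, LinearMap.comp_add, LinearMap.add_comp]

lemma conv_add_right (φ ψ ψ' : Module.Dual k A) :
    conv φ (ψ + ψ') = conv φ ψ + conv φ ψ' := by
  simp [conv, TensorProduct.map_add_right, LinearMap.comp_add, LinearMap.add_comp]

lemma conv_smul_left (c : k) (φ ψ : Module.Dual k A) : conv (c • φ) ψ = c • conv φ ψ := by
  simp [conv, TensorProduct.map_smul_left, LinearMap.comp_smul, LinearMap.smul_comp]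

lemma conv_smul_right (c : k) (φ ψ : Module.Dual k A) : conv φ (c • ψ) = c • conv φ ψ := by
  simp [conv, TensorProduct.map_smul_right, LinearMap.comp_smul, LinearMap.smul_comp]

lemma comp_mulRight_add (φ : Module.Dual k A) (h h' : A) :
    φ ∘ₗ LinearMap.mulRight k (h + h')
      = φ ∘ₗ LinearMap.mulRight k h + φ ∘ₗ LinearMap.mulRight k h' :=
  LinearMap.ext fun x => by simp [mul_add]

lemma comp_mulRight_smul (φ : Module.Dual k A) (c : k) (h : A) :
    φ ∘ₗ LinearMap.mulRight k (c • h) = c • (φ ∘ₗ LinearMap.mulRight k h) :=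
  LinearMap.ext fun x => by simp [mul_smul_comm]

/-- The action of `ψ ⊗ h ∈ H(O(H)) = H* ⊗ H` on `H*`: `(ψ ⊗ h) ▷ φ = ψ · φ(? h)`. -/
noncomputable def heisOp (ψ : Module.Dual k A) (h : A) : Module.End k (Module.Dual k A) :=
  { toFun := fun φ => conv ψ (φ ∘ₗ LinearMap.mulRight k h)
    map_add' := fun φ φ' => by
      show conv ψ ((φ + φ') ∘ₗ LinearMap.mulRight k h) = _
      rw [LinearMap.add_comp, conv_add_right]
    map_smul' := fun c φ => by
      show conv ψ ((c • φ) ∘ₗ LinearMap.mulRight k h)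
        = c • conv ψ (φ ∘ₗ LinearMap.mulRight k h)
      rw [LinearMap.smul_comp, conv_smul_right] }

/-- The representation map `Φ : H(O(H)) = H* ⊗ H → End(H*)`. -/
noncomputable def heisRep : (Module.Dual k A) ⊗[k] A →ₗ[k] Module.End k (Module.Dual k A) :=
  TensorProduct.lift
    { toFun := fun ψ =>
        { toFun := fun h => heisOp ψ h
          map_add' := fun h h' => by
            refine LinearMap.ext fun φ => ?_
            show conv ψ (φ ∘ₗ LinearMap.mulRight k (h + h'))
              = conv ψ (φ ∘ₗ LinearMap.mulRight k h) + conv ψ (φ ∘ₗ LinearMap.mulRight k h')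
            rw [comp_mulRight_add, conv_add_right]
          map_smul' := fun c h => by
            refine LinearMap.ext fun φ => ?_
            show conv ψ (φ ∘ₗ LinearMap.mulRight k (c • h))
              = c • conv ψ (φ ∘ₗ LinearMap.mulRight k h)
            rw [comp_mulRight_smul, conv_smul_right] }
      map_add' := fun ψ ψ' => by
        refine LinearMap.ext fun h => LinearMap.ext fun φ => ?_
        show conv (ψ + ψ') (φ ∘ₗ LinearMap.mulRight k h)
          = conv ψ (φ ∘ₗ LinearMap.mulRight k h) + conv ψ' (φ ∘ₗ LinearMap.mulRight k h)
        exact conv_add_left _ _ _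
      map_smul' := fun c ψ => by
        refine LinearMap.ext fun h => LinearMap.ext fun φ => ?_
        show conv (c • ψ) (φ ∘ₗ LinearMap.mulRight k h)
          = c • conv ψ (φ ∘ₗ LinearMap.mulRight k h)
        exact conv_smul_left _ _ _ }

section ConvolutionMonoid

variable {K : Type} [Field K]
variable {C : Type} [AddCommGroup C] [Module K C] [Coalgebra K C]
variable {B : Type} [Ring B] [Algebra K B]

/-- Convolution product on linear maps from a coalgebra to an algebra. -/
noncomputable def cmul (f g : C →ₗ[K] B) : C →ₗ[K] B :=
  (LinearMap.mul' K B) ∘ₗ (TensorProduct.map f g) ∘ₗ (Coalgebra.comul (R := K))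

/-- Convolution unit. -/
noncomputable def cone : C →ₗ[K] B :=
  (Algebra.linearMap K B) ∘ₗ (Coalgebra.counit (R := K))

lemma cmul_apply_repr (f g : C →ₗ[K] B) {c : C} {ιr : Type*} (r : Coalgebra.Repr K c ιr) :
    cmul f g c = ∑ i ∈ r.index, f (r.left i) * g (r.right i) := by
  simp only [cmul, LinearMap.comp_apply, ← r.eq, map_sum, TensorProduct.map_tmul,
    LinearMap.mul'_apply]

lemma cone_apply (c : C) : cone (K := K) (B := B) c = Coalgebra.counit (R := K) c • 1 := by
  simp [cone, Algebra.smul_def, Algebra.linearMap_apply]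

lemma sum_counit_smul {c : C} {ιr : Type*} (r : Coalgebra.Repr K c ιr) :
    ∑ i ∈ r.index, Coalgebra.counit (R := K) (r.left i) • r.right i = c := by
  have h : (TensorProduct.lid K C) (∑ i ∈ r.index,
      Coalgebra.counit (R := K) (r.left i) ⊗ₜ[K] (r.right i)) = ∑ i ∈ r.index,
      Coalgebra.counit (R := K) (r.left i) • r.right i := by
    rw [map_sum]; simp only [TensorProduct.lid_tmul]
  rw [← h, Coalgebra.sum_counit_tmul_eq r, TensorProduct.lid_tmul, one_smul]

lemma sum_smul_counit {c : C} {ιr : Type*} (r : Coalgebra.Repr K c ιr) :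
    ∑ i ∈ r.index, Coalgebra.counit (R := K) (r.right i) • r.left i = c := by
  have h : (TensorProduct.rid K C) (∑ i ∈ r.index,
      (r.left i) ⊗ₜ[K] Coalgebra.counit (R := K) (r.right i)) = ∑ i ∈ r.index,
      Coalgebra.counit (R := K) (r.right i) • r.left i := by
    rw [map_sum]; simp only [TensorProduct.rid_tmul]
  rw [← h, Coalgebra.sum_tmul_counit_eq r, TensorProduct.rid_tmul, one_smul]

lemma cmul_cone_left (f : C →ₗ[K] B) : cmul cone f = f := by
  refine LinearMap.ext fun c => ?_
  rw [cmul_apply_repr (r := Coalgebra.Repr.arbitrary K c)]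
  simp only [cone_apply, smul_mul_assoc, one_mul, ← map_smul, ← map_sum, sum_counit_smul]

lemma cmul_cone_right (f : C →ₗ[K] B) : cmul f cone = f := by
  refine LinearMap.ext fun c => ?_
  rw [cmul_apply_repr (r := Coalgebra.Repr.arbitrary K c)]
  simp only [cone_apply, mul_smul_comm, mul_one, ← map_smul, ← map_sum, sum_smul_counit]

lemma cmul_assoc (f g h : C →ₗ[K] B) : cmul (cmul f g) h = cmul f (cmul g h) := by
  classical
  refine LinearMap.ext fun c => ?_
  set r := Coalgebra.Repr.arbitrary K c with hr
  have key := Coalgebra.sum_tmul_tmul_eq r (fun i => Coalgebra.Repr.arbitrary K (r.left i))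
      (fun i => Coalgebra.Repr.arbitrary K (r.right i))
  set μ : C ⊗[K] (C ⊗[K] C) →ₗ[K] B :=
    (LinearMap.mul' K B) ∘ₗ TensorProduct.map f
      ((LinearMap.mul' K B) ∘ₗ TensorProduct.map g h) with hμ
  have key2 := congrArg μ key
  simp only [map_sum, hμ, LinearMap.comp_apply, TensorProduct.map_tmul,
    LinearMap.mul'_apply] at key2
  rw [cmul_apply_repr (r := r), cmul_apply_repr (r := r)]
  calc ∑ i ∈ r.index, cmul f g (r.left i) * h (r.right i)
      = ∑ i ∈ r.index, ∑ j ∈ (Coalgebra.Repr.arbitrary K (r.left i)).index,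
          f ((Coalgebra.Repr.arbitrary K (r.left i)).left j) *
            (g ((Coalgebra.Repr.arbitrary K (r.left i)).right j) * h (r.right i)) := by
        refine Finset.sum_congr rfl fun i _ => ?_
        rw [cmul_apply_repr (r := Coalgebra.Repr.arbitrary K (r.left i)), Finset.sum_mul]
        simp [mul_assoc]
    _ = ∑ i ∈ r.index, ∑ j ∈ (Coalgebra.Repr.arbitrary K (r.right i)).index,
          f (r.left i) * (g ((Coalgebra.Repr.arbitrary K (r.right i)).left j) *
            h ((Coalgebra.Repr.arbitrary K (r.right i)).right j)) := key2
    _ = ∑ i ∈ r.index, f (r.left i) * cmul g h (r.right i) := by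
        refine Finset.sum_congr rfl fun i _ => ?_
        rw [cmul_apply_repr (r := Coalgebra.Repr.arbitrary K (r.right i)), Finset.mul_sum]

/-- Uniqueness of convolution inverses. -/
lemma cinv_unique {f g h : C →ₗ[K] B} (h1 : cmul f g = cone) (h2 : cmul g h = cone) :
    f = h := by
  have : cmul f (cmul g h) = cmul (cmul f g) h := (cmul_assoc f g h).symm
  rw [h1, h2, cmul_cone_right, cmul_cone_left] at this
  exact this

end ConvolutionMonoid

section CoassocTransport

variable {K : Type} [Field K]
variable {C : Type} [AddCommGroup C] [Module K C] [Coalgebra K C]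

lemma coassoc_transport {V : Type} [AddCommGroup V] [Module K V]
    (W : C ⊗[K] (C ⊗[K] C) →ₗ[K] V) {c : C} {ιr : Type*} (r : Coalgebra.Repr K c ιr)
    {κL κR : Type*} (RL : ∀ i, Coalgebra.Repr K (r.left i) κL)
    (RR : ∀ i, Coalgebra.Repr K (r.right i) κR) :
    ∑ i ∈ r.index, ∑ j ∈ (RL i).index,
        W ((RL i).left j ⊗ₜ[K] ((RL i).right j ⊗ₜ[K] r.right i))
      = ∑ i ∈ r.index, ∑ j ∈ (RR i).index,
        W (r.left i ⊗ₜ[K] ((RR i).left j ⊗ₜ[K] (RR i).right j)) := by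
  have h := congrArg W (Coalgebra.sum_tmul_tmul_eq r RL RR)
  simpa only [map_sum] using h

end CoassocTransport
section AntipodeFacts

variable {k A : Type} [Field k] [Ring A] [HopfAlgebra k A]

open Coalgebra HopfAlgebra TensorProduct

/-- A representation of `comul (a * b)` built from representations of `comul a`, `comul b`. -/
noncomputable def Coalgebra.Repr.mulRepr {a b : A} {ιa ιb : Type*} (ra : Coalgebra.Repr k a ιa)
    (rb : Coalgebra.Repr k b ιb) : Coalgebra.Repr k (a * b) (ιa × ιb) where
  index := ra.index ×ˢ rb.index
  left := fun p => ra.left p.1 * rb.left p.2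
  right := fun p => ra.right p.1 * rb.right p.2
  eq := by
    rw [Finset.sum_product]
    simp only [← Algebra.TensorProduct.tmul_mul_tmul]
    rw [← Finset.sum_mul_sum]
    rw [ra.eq, rb.eq]
    exact (Bialgebra.comul_mul a b).symm

lemma comul_tmul_repr {x y : A} {ιx ιy : Type*} (rx : Coalgebra.Repr k x ιx) (ry : Coalgebra.Repr k y ιy) :
    Coalgebra.comul (R := k) (x ⊗ₜ[k] y)
      = ∑ i ∈ rx.index, ∑ j ∈ ry.index,
          (rx.left i ⊗ₜ[k] ry.left j) ⊗ₜ[k] (rx.right i ⊗ₜ[k] ry.right j) := by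
  rw [TensorProduct.comul_tmul]
  simp only [← rx.eq, ← ry.eq]
  rw [TensorProduct.sum_tmul, map_sum]
  refine Finset.sum_congr rfl fun i _ => ?_
  rw [TensorProduct.tmul_sum, map_sum]
  refine Finset.sum_congr rfl fun j _ => ?_
  simp [TensorProduct.AlgebraTensorModule.tensorTensorTensorComm_tmul]

lemma counit_tmul_eq (x y : A) :
    Coalgebra.counit (R := k) (x ⊗ₜ[k] y)
      = Coalgebra.counit (R := k) x * Coalgebra.counit (R := k) y := by
  rw [TensorProduct.counit_tmul, smul_eq_mul, mul_comm]

lemma antipode_one_eq : HopfAlgebra.antipode (R := k) (1 : A) = 1 := by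
  have h := HopfAlgebra.mul_antipode_rTensor_comul_apply (R := k) (1 : A)
  simpa [Algebra.TensorProduct.one_def] using h

/-- `S (a b) = S b * S a`, proved via uniqueness of convolution inverses in
`Hom(A ⊗ A, A)`. -/
lemma antipode_mul_rev (a b : A) :
    HopfAlgebra.antipode (R := k) (a * b)
      = HopfAlgebra.antipode (R := k) b * HopfAlgebra.antipode (R := k) a := by
  classical
  have h1 : cmul ((HopfAlgebra.antipode (R := k) (A := A)) ∘ₗ LinearMap.mul' k A)
      (LinearMap.mul' k A) = cone := by
    apply TensorProduct.ext'
    intro x y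
    set rx := Coalgebra.Repr.arbitrary k x
    set ry := Coalgebra.Repr.arbitrary k y
    have hL : cmul ((HopfAlgebra.antipode (R := k) (A := A)) ∘ₗ LinearMap.mul' k A)
        (LinearMap.mul' k A) (x ⊗ₜ[k] y)
        = ∑ i ∈ rx.index, ∑ j ∈ ry.index,
            HopfAlgebra.antipode (R := k) (rx.left i * ry.left j)
              * (rx.right i * ry.right j) := by
      show LinearMap.mul' k A (TensorProduct.map _ _ (Coalgebra.comul (x ⊗ₜ[k] y))) = _
      rw [comul_tmul_repr rx ry]
      simp only [map_sum, TensorProduct.map_tmul, LinearMap.mul'_apply,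
        LinearMap.comp_apply]
    rw [hL]
    have key := HopfAlgebra.sum_antipode_mul_eq_smul (R := k)
      (Coalgebra.Repr.mulRepr rx ry)
    simp only [Coalgebra.Repr.mulRepr] at key
    rw [Finset.sum_product] at key
    rw [key, cone_apply, counit_tmul_eq, Bialgebra.counit_mul]
  have h2 : cmul (LinearMap.mul' k A)
      ((LinearMap.mul' k A) ∘ₗ
        (TensorProduct.map (HopfAlgebra.antipode (R := k)) (HopfAlgebra.antipode (R := k)))
          ∘ₗ (TensorProduct.comm k A A).toLinearMap) = cone := by
    apply TensorProduct.ext'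
    intro x y
    set rx := Coalgebra.Repr.arbitrary k x
    set ry := Coalgebra.Repr.arbitrary k y
    have hL : cmul (LinearMap.mul' k A)
        ((LinearMap.mul' k A) ∘ₗ
          (TensorProduct.map (HopfAlgebra.antipode (R := k)) (HopfAlgebra.antipode (R := k)))
            ∘ₗ (TensorProduct.comm k A A).toLinearMap) (x ⊗ₜ[k] y)
        = ∑ i ∈ rx.index, ∑ j ∈ ry.index,
            rx.left i * ((ry.left j * HopfAlgebra.antipode (R := k) (ry.right j))
              * HopfAlgebra.antipode (R := k) (rx.right i)) := by
      show LinearMap.mul' k A (TensorProduct.map _ _ (Coalgebra.comul (x ⊗ₜ[k] y))) = _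
      rw [comul_tmul_repr rx ry]
      simp only [map_sum, TensorProduct.map_tmul, LinearMap.mul'_apply,
        LinearMap.comp_apply, LinearEquiv.coe_coe, TensorProduct.comm_tmul, mul_assoc]
    rw [hL]
    have hy := HopfAlgebra.sum_mul_antipode_eq_smul (R := k) ry
    have hx := HopfAlgebra.sum_mul_antipode_eq_smul (R := k) rx
    calc ∑ i ∈ rx.index, ∑ j ∈ ry.index,
            rx.left i * ((ry.left j * HopfAlgebra.antipode (R := k) (ry.right j))
              * HopfAlgebra.antipode (R := k) (rx.right i))
        = ∑ i ∈ rx.index, rx.left i *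
            ((∑ j ∈ ry.index, ry.left j * HopfAlgebra.antipode (R := k) (ry.right j))
              * HopfAlgebra.antipode (R := k) (rx.right i)) := by
          refine Finset.sum_congr rfl fun i _ => ?_
          rw [Finset.sum_mul, Finset.mul_sum]
      _ = Coalgebra.counit (R := k) y •
            ∑ i ∈ rx.index, rx.left i * HopfAlgebra.antipode (R := k) (rx.right i) := by
          rw [hy, Finset.smul_sum]
          refine Finset.sum_congr rfl fun i _ => ?_
          rw [smul_mul_assoc, one_mul, mul_smul_comm]
      _ = cone (x ⊗ₜ[k] y) := by
          rw [hx, cone_apply, counit_tmul_eq, smul_smul, mul_comm]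
  have hfν := cinv_unique h1 h2
  have := LinearMap.congr_fun hfν (a ⊗ₜ[k] b)
  simpa using this

end AntipodeFacts
section AntipodeComul

variable {k A : Type} [Field k] [Ring A] [HopfAlgebra k A]

open Coalgebra HopfAlgebra TensorProduct

/-- `Δ ∘ S = σ ∘ (S ⊗ S) ∘ Δ`, proved via uniqueness of convolution inverses in
`Hom(A, A ⊗ A)`. -/
lemma comul_antipode_eq :
    (Coalgebra.comul (R := k) (A := A)) ∘ₗ HopfAlgebra.antipode (R := k)
      = (TensorProduct.comm k A A).toLinearMap
          ∘ₗ TensorProduct.map (HopfAlgebra.antipode (R := k)) (HopfAlgebra.antipode (R := k))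
          ∘ₗ Coalgebra.comul (R := k) := by
  classical
  set G : A →ₗ[k] A ⊗[k] A :=
    (TensorProduct.comm k A A).toLinearMap
      ∘ₗ TensorProduct.map (HopfAlgebra.antipode (R := k)) (HopfAlgebra.antipode (R := k))
      ∘ₗ Coalgebra.comul (R := k) with hG
  have hGapply : ∀ (c : A) {ιc : Type} (rc : Coalgebra.Repr k c ιc), G c
      = ∑ u ∈ rc.index, HopfAlgebra.antipode (R := k) (rc.right u)
          ⊗ₜ[k] HopfAlgebra.antipode (R := k) (rc.left u) := by
    intro c _ rc
    rw [hG]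
    simp only [LinearMap.comp_apply, LinearEquiv.coe_coe]
    rw [← rc.eq]
    simp [map_sum, TensorProduct.map_tmul, TensorProduct.comm_tmul]
  have h1 : cmul ((Coalgebra.comul (R := k) (A := A)) ∘ₗ HopfAlgebra.antipode (R := k))
      (Coalgebra.comul (R := k)) = cone := by
    refine LinearMap.ext fun a => ?_
    set r := Coalgebra.Repr.arbitrary k a
    rw [cmul_apply_repr (r := r), cone_apply]
    calc ∑ i ∈ r.index,
          ((Coalgebra.comul (R := k) (A := A)) ∘ₗ HopfAlgebra.antipode (R := k)) (r.left i)
            * Coalgebra.comul (r.right i)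
        = Coalgebra.comul (R := k)
            (∑ i ∈ r.index, HopfAlgebra.antipode (R := k) (r.left i) * r.right i) := by
          rw [map_sum]
          exact Finset.sum_congr rfl fun i _ => (Bialgebra.comul_mul _ _).symm
      _ = Coalgebra.counit (R := k) a • (1 : A ⊗[k] A) := by
          rw [HopfAlgebra.sum_antipode_mul_eq_smul r, map_smul, Bialgebra.comul_one]
  have h2 : cmul (Coalgebra.comul (R := k) (A := A)) G = cone := by
    refine LinearMap.ext fun a => ?_
    set r := Coalgebra.Repr.arbitrary k a with hr
    rw [cmul_apply_repr (r := r), cone_apply]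
    set W : A ⊗[k] (A ⊗[k] A) →ₗ[k] A ⊗[k] A :=
      (LinearMap.mul' k (A ⊗[k] A)) ∘ₗ (LinearMap.lTensor (A ⊗[k] A) G)
        ∘ₗ (TensorProduct.assoc k A A A).symm.toLinearMap with hW
    have hWapply : ∀ x y z : A, W (x ⊗ₜ[k] (y ⊗ₜ[k] z)) = (x ⊗ₜ[k] y) * G z := by
      intro x y z
      rw [hW]
      simp only [LinearMap.comp_apply, LinearEquiv.coe_coe, TensorProduct.assoc_symm_tmul,
        LinearMap.lTensor_tmul, LinearMap.mul'_apply]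
    have stage2 : ∀ i ∈ r.index,
        (∑ j ∈ (Coalgebra.Repr.arbitrary k (r.right i)).index,
          W (r.left i ⊗ₜ[k] ((Coalgebra.Repr.arbitrary k (r.right i)).left j
            ⊗ₜ[k] (Coalgebra.Repr.arbitrary k (r.right i)).right j)))
        = (r.left i * HopfAlgebra.antipode (R := k) (r.right i)) ⊗ₜ[k] (1 : A) := by
      intro i _
      set ri := Coalgebra.Repr.arbitrary k (r.right i) with hri
      set W' : A ⊗[k] (A ⊗[k] A) →ₗ[k] A ⊗[k] A :=
        (LinearMap.mul' k (A ⊗[k] A)) ∘ₗ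
          (TensorProduct.map ((TensorProduct.mk k A A) (r.left i))
            ((TensorProduct.map (HopfAlgebra.antipode (R := k))
              (HopfAlgebra.antipode (R := k))) ∘ₗ (TensorProduct.comm k A A).toLinearMap))
        with hW'
      have hW'apply : ∀ x y z : A, W' (x ⊗ₜ[k] (y ⊗ₜ[k] z))
          = (r.left i * HopfAlgebra.antipode (R := k) z)
              ⊗ₜ[k] (x * HopfAlgebra.antipode (R := k) y) := by
        intro x y z
        rw [hW']
        simp only [LinearMap.comp_apply, TensorProduct.map_tmul, LinearEquiv.coe_coe,
          TensorProduct.comm_tmul, TensorProduct.mk_apply, LinearMap.mul'_apply,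
          Algebra.TensorProduct.tmul_mul_tmul]
      calc ∑ j ∈ ri.index, W (r.left i ⊗ₜ[k] (ri.left j ⊗ₜ[k] ri.right j))
          = ∑ j ∈ ri.index, ∑ u ∈ (Coalgebra.Repr.arbitrary k (ri.right j)).index,
              W' (ri.left j ⊗ₜ[k] ((Coalgebra.Repr.arbitrary k (ri.right j)).left u
                ⊗ₜ[k] (Coalgebra.Repr.arbitrary k (ri.right j)).right u)) := by
            refine Finset.sum_congr rfl fun j _ => ?_
            rw [hWapply, hGapply _ (Coalgebra.Repr.arbitrary k (ri.right j)),
              Finset.mul_sum]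
            refine Finset.sum_congr rfl fun u _ => ?_
            rw [hW'apply, Algebra.TensorProduct.tmul_mul_tmul]
        _ = ∑ j ∈ ri.index, ∑ u ∈ (Coalgebra.Repr.arbitrary k (ri.left j)).index,
              W' ((Coalgebra.Repr.arbitrary k (ri.left j)).left u
                ⊗ₜ[k] ((Coalgebra.Repr.arbitrary k (ri.left j)).right u ⊗ₜ[k] ri.right j)) :=
            (coassoc_transport W' ri (fun j => Coalgebra.Repr.arbitrary k (ri.left j))
              (fun j => Coalgebra.Repr.arbitrary k (ri.right j))).symm
        _ = ∑ j ∈ ri.index, (r.left i * HopfAlgebra.antipode (R := k) (ri.right j))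
              ⊗ₜ[k] (Coalgebra.counit (R := k) (ri.left j) • (1 : A)) := by
            refine Finset.sum_congr rfl fun j _ => ?_
            rw [← HopfAlgebra.sum_mul_antipode_eq_smul
              (Coalgebra.Repr.arbitrary k (ri.left j)), TensorProduct.tmul_sum]
            exact Finset.sum_congr rfl fun u _ => hW'apply _ _ _
        _ = (r.left i * HopfAlgebra.antipode (R := k) (r.right i)) ⊗ₜ[k] (1 : A) := by
            have : ∀ j ∈ ri.index,
                (r.left i * HopfAlgebra.antipode (R := k) (ri.right j))
                  ⊗ₜ[k] (Coalgebra.counit (R := k) (ri.left j) • (1 : A))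
                = (r.left i * HopfAlgebra.antipode (R := k)
                    (Coalgebra.counit (R := k) (ri.left j) • ri.right j)) ⊗ₜ[k] (1 : A) := by
              intro j _
              rw [map_smul, mul_smul_comm, TensorProduct.tmul_smul,
                TensorProduct.smul_tmul']
            rw [Finset.sum_congr rfl this, ← TensorProduct.sum_tmul, ← Finset.mul_sum,
              ← map_sum, _root_.sum_counit_smul ri]
    calc ∑ i ∈ r.index, Coalgebra.comul (R := k) (r.left i) * G (r.right i)
        = ∑ i ∈ r.index, ∑ j ∈ (Coalgebra.Repr.arbitrary k (r.left i)).index,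
            W ((Coalgebra.Repr.arbitrary k (r.left i)).left j
              ⊗ₜ[k] ((Coalgebra.Repr.arbitrary k (r.left i)).right j ⊗ₜ[k] r.right i)) := by
          refine Finset.sum_congr rfl fun i _ => ?_
          rw [← (Coalgebra.Repr.arbitrary k (r.left i)).eq, Finset.sum_mul]
          exact Finset.sum_congr rfl fun j _ => (hWapply _ _ _).symm
      _ = ∑ i ∈ r.index, ∑ j ∈ (Coalgebra.Repr.arbitrary k (r.right i)).index,
            W (r.left i ⊗ₜ[k] ((Coalgebra.Repr.arbitrary k (r.right i)).left j
              ⊗ₜ[k] (Coalgebra.Repr.arbitrary k (r.right i)).right j)) :=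
          coassoc_transport W r (fun i => Coalgebra.Repr.arbitrary k (r.left i))
            (fun i => Coalgebra.Repr.arbitrary k (r.right i))
      _ = ∑ i ∈ r.index,
            (r.left i * HopfAlgebra.antipode (R := k) (r.right i)) ⊗ₜ[k] (1 : A) :=
          Finset.sum_congr rfl stage2
      _ = Coalgebra.counit (R := k) a • (1 : A ⊗[k] A) := by
          rw [← TensorProduct.sum_tmul, HopfAlgebra.sum_mul_antipode_eq_smul r]
          simp [Algebra.TensorProduct.one_def, TensorProduct.smul_tmul']
  exact cinv_unique h1 h2

end AntipodeComul
section TrilinearHelpers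

variable {K : Type} [Field K]
variable {M1 M2 M3 V : Type} [AddCommGroup M1] [Module K M1] [AddCommGroup M2] [Module K M2]
  [AddCommGroup M3] [Module K M3] [AddCommGroup V] [Module K V]

/-- Bundle an unbundled trilinear map. -/
noncomputable def mk3 (f : M1 → M2 → M3 → V)
    (hx : ∀ y z, IsLinearMap K (fun x => f x y z))
    (hy : ∀ x z, IsLinearMap K (fun y => f x y z))
    (hz : ∀ x y, IsLinearMap K (f x y)) : M1 →ₗ[K] M2 →ₗ[K] M3 →ₗ[K] V where
  toFun := fun x =>
    { toFun := fun y => (hz x y).mk'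
      map_add' := fun y y' => LinearMap.ext fun z => by
        simp only [IsLinearMap.mk'_apply, LinearMap.add_apply]
        exact (hy x z).map_add y y'
      map_smul' := fun c y => LinearMap.ext fun z => by
        simp only [IsLinearMap.mk'_apply, LinearMap.smul_apply, RingHom.id_apply]
        exact (hy x z).map_smul c y }
  map_add' := fun x x' => LinearMap.ext fun y => LinearMap.ext fun z => by
    simp only [LinearMap.coe_mk, AddHom.coe_mk, IsLinearMap.mk'_apply, LinearMap.add_apply]
    exact (hx y z).map_add x x'
  map_smul' := fun c x => LinearMap.ext fun y => LinearMap.ext fun z => by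
    simp only [LinearMap.coe_mk, AddHom.coe_mk, IsLinearMap.mk'_apply, LinearMap.smul_apply,
      RingHom.id_apply]
    exact (hx y z).map_smul c x

@[simp] lemma mk3_apply (f : M1 → M2 → M3 → V) (hx hy hz) (x y z) :
    mk3 (K := K) f hx hy hz x y z = f x y z := rfl

end TrilinearHelpers

section CoassocTransport3

variable {K : Type} [Field K]
variable {C : Type} [AddCommGroup C] [Module K C] [Coalgebra K C]
variable {V : Type} [AddCommGroup V] [Module K V]

lemma coassoc_transport3 (T : C →ₗ[K] C →ₗ[K] C →ₗ[K] V) {c : C} {ιr : Type*} (r : Coalgebra.Repr K c ιr)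
    {κL κR : Type*} (RL : ∀ i, Coalgebra.Repr K (r.left i) κL)
    (RR : ∀ i, Coalgebra.Repr K (r.right i) κR) :
    ∑ i ∈ r.index, ∑ j ∈ (RL i).index,
        T ((RL i).left j) ((RL i).right j) (r.right i)
      = ∑ i ∈ r.index, ∑ j ∈ (RR i).index,
        T (r.left i) ((RR i).left j) ((RR i).right j) := by
  set W : C ⊗[K] (C ⊗[K] C) →ₗ[K] V :=
    TensorProduct.lift ((TensorProduct.lift.equiv (RingHom.id K) C C V).toLinearMap ∘ₗ T) with hW
  have hWapply : ∀ x y z : C, W (x ⊗ₜ[K] (y ⊗ₜ[K] z)) = T x y z := by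
    intro x y z
    rw [hW]
    simp [TensorProduct.lift.tmul, TensorProduct.lift.equiv_apply]
  have h := coassoc_transport W r RL RR
  simpa only [hWapply] using h

end CoassocTransport3

section ConvFacts

variable {k A : Type} [Field k] [Ring A] [HopfAlgebra k A]

lemma conv_eq_cmul (φ ψ : Module.Dual k A) : conv φ ψ = cmul φ ψ := rfl

lemma conv_apply_repr (φ ψ : Module.Dual k A) {x : A} {ιr : Type*} (r : Coalgebra.Repr k x ιr) :
    conv φ ψ x = ∑ i ∈ r.index, φ (r.left i) * ψ (r.right i) :=
  cmul_apply_repr φ ψ r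

lemma cone_eq_counit : (cone : A →ₗ[k] k) = Coalgebra.counit := by
  refine LinearMap.ext fun x => ?_
  simp [cone, Algebra.linearMap_apply]

lemma conv_assoc (φ ψ χ : Module.Dual k A) : conv (conv φ ψ) χ = conv φ (conv ψ χ) := by
  simp only [conv_eq_cmul]; exact cmul_assoc φ ψ χ

lemma conv_counit_left (φ : Module.Dual k A) :
    conv (Coalgebra.counit (R := k)) φ = φ := by
  rw [show (Coalgebra.counit (R := k) : Module.Dual k A) = cone from cone_eq_counit.symm,
    conv_eq_cmul]
  exact cmul_cone_left φ

lemma conv_counit_right (φ : Module.Dual k A) :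
    conv φ (Coalgebra.counit (R := k)) = φ := by
  rw [show (Coalgebra.counit (R := k) : Module.Dual k A) = cone from cone_eq_counit.symm,
    conv_eq_cmul]
  exact cmul_cone_right φ

/-- Representation of `comul (S a)` from a representation of `comul a`. -/
lemma comul_antipode_repr {a : A} {ιr : Type*} (r : Coalgebra.Repr k a ιr) :
    Coalgebra.comul (R := k) (HopfAlgebra.antipode (R := k) a)
      = ∑ i ∈ r.index, HopfAlgebra.antipode (R := k) (r.right i)
          ⊗ₜ[k] HopfAlgebra.antipode (R := k) (r.left i) := by
  have h := LinearMap.congr_fun (comul_antipode_eq (k := k) (A := A)) a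
  simp only [LinearMap.comp_apply, LinearEquiv.coe_coe] at h
  rw [h, ← r.eq]
  simp [map_sum]

/-- `Repr` for `S a` given one for `a`. -/
noncomputable def Coalgebra.Repr.antipodeRepr {a : A} {ιr : Type*} (r : Coalgebra.Repr k a ιr) :
    Coalgebra.Repr k (HopfAlgebra.antipode (R := k) a) ιr where
  index := r.index
  left := fun i => HopfAlgebra.antipode (R := k) (r.right i)
  right := fun i => HopfAlgebra.antipode (R := k) (r.left i)
  eq := (comul_antipode_repr r).symm

end ConvFacts
section DualBasisFacts

variable {K : Type} [Field K]
variable {M : Type} [AddCommGroup M] [Module K M]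
variable {V : Type} [AddCommGroup V] [Module K V]
variable {ι : Type} [Fintype ι]

lemma db1 (e : Module.Basis ι K M) (L : M →ₗ[K] V) (x : M) :
    ∑ i, e.coord i x • L (e i) = L x := by
  conv_rhs => rw [← e.sum_repr x]
  rw [map_sum]
  refine Finset.sum_congr rfl fun i _ => ?_
  rw [map_smul, Module.Basis.coord_apply]

lemma dual_expand (e : Module.Basis ι K M) (φ : Module.Dual K M) :
    ∑ i, φ (e i) • e.coord i = φ := by
  refine LinearMap.ext fun x => ?_
  rw [LinearMap.sum_apply]
  have h := db1 (V := K) e φ x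
  rw [← h]
  refine Finset.sum_congr rfl fun i _ => ?_
  simp only [LinearMap.smul_apply, Module.Basis.coord_apply, smul_eq_mul]
  ring

lemma db1' (e : Module.Basis ι K M) (L : Module.Dual K M →ₗ[K] V) (φ : Module.Dual K M) :
    ∑ i, φ (e i) • L (e.coord i) = L φ := by
  conv_rhs => rw [← dual_expand e φ]
  rw [map_sum]
  refine Finset.sum_congr rfl fun i _ => ?_
  rw [map_smul]

end DualBasisFacts

section DB2

variable {k A : Type} [Field k] [Ring A] [HopfAlgebra k A]
variable {V : Type} [AddCommGroup V] [Module k V]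
variable {ι : Type} [Fintype ι]

lemma db2 (e : Module.Basis ι k A) (f : Module.Dual k A → A → A → V)
    (h1 : ∀ x y, IsLinearMap k (fun φ => f φ x y))
    (h2 : ∀ φ y, IsLinearMap k (fun x => f φ x y))
    (h3 : ∀ φ x, IsLinearMap k (f φ x))
    {κ : Type*} (R : ∀ i, Coalgebra.Repr k (e i) κ) :
    ∑ i, ∑ t ∈ (R i).index, f (e.coord i) ((R i).left t) ((R i).right t)
      = ∑ p, ∑ q, f (conv (e.coord p) (e.coord q)) (e p) (e q) := by
  classical
  have step1 : ∀ i, ∑ t ∈ (R i).index, f (e.coord i) ((R i).left t) ((R i).right t)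
      = ∑ q, ∑ p, (conv (e.coord p) (e.coord q) (e i)) • f (e.coord i) (e p) (e q) := by
    intro i
    have expand : ∀ t ∈ (R i).index, f (e.coord i) ((R i).left t) ((R i).right t)
        = ∑ q, ∑ p, (e.coord p ((R i).left t) * e.coord q ((R i).right t))
            • f (e.coord i) (e p) (e q) := by
      intro t _
      have hz := db1 e ((h3 (e.coord i) ((R i).left t)).mk') ((R i).right t)
      simp only [IsLinearMap.mk'_apply] at hz
      rw [← hz]
      refine Finset.sum_congr rfl fun q _ => ?_
      have hyq := db1 e ((h2 (e.coord i) (e q)).mk') ((R i).left t)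
      simp only [IsLinearMap.mk'_apply] at hyq
      rw [← hyq, Finset.smul_sum]
      refine Finset.sum_congr rfl fun p _ => ?_
      rw [smul_smul, mul_comm]
    rw [Finset.sum_congr rfl expand, Finset.sum_comm]
    refine Finset.sum_congr rfl fun q _ => ?_
    rw [Finset.sum_comm]
    refine Finset.sum_congr rfl fun p _ => ?_
    rw [← Finset.sum_smul, conv_apply_repr _ _ (R i)]
  rw [Finset.sum_congr rfl fun i _ => step1 i, Finset.sum_comm]
  have mid : ∀ q, ∑ i, ∑ p, (conv (e.coord p) (e.coord q) (e i)) • f (e.coord i) (e p) (e q)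
      = ∑ p, f (conv (e.coord p) (e.coord q)) (e p) (e q) := by
    intro q
    rw [Finset.sum_comm]
    refine Finset.sum_congr rfl fun p _ => ?_
    have := db1' e ((h1 (e p) (e q)).mk') (conv (e.coord p) (e.coord q))
    simp only [IsLinearMap.mk'_apply] at this
    exact this
  rw [Finset.sum_congr rfl fun q _ => mid q, Finset.sum_comm]

end DB2
section HopfModule

variable {k A : Type} [Field k] [Ring A] [HopfAlgebra k A]

open Coalgebra HopfAlgebra

/-- The right "Hopf-module" action of `A` on the dual: `f ↽ h = f (? · S h)`. -/
noncomputable def rS (f : Module.Dual k A) (h : A) : Module.Dual k A :=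
  f ∘ₗ LinearMap.mulRight k (HopfAlgebra.antipode (R := k) h)

lemma rS_apply (f : Module.Dual k A) (h x : A) :
    rS f h x = f (x * HopfAlgebra.antipode (R := k) h) := rfl

lemma rS_add_left (f g : Module.Dual k A) (h : A) : rS (f + g) h = rS f h + rS g h :=
  LinearMap.add_comp _ _ _

lemma rS_smul_left (c : k) (f : Module.Dual k A) (h : A) : rS (c • f) h = c • rS f h :=
  LinearMap.smul_comp _ _ _

lemma rS_add_right (f : Module.Dual k A) (h h' : A) : rS f (h + h') = rS f h + rS f h' := by
  unfold rS
  rw [map_add, comp_mulRight_add]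

lemma rS_smul_right (c : k) (f : Module.Dual k A) (h : A) : rS f (c • h) = c • rS f h := by
  unfold rS
  rw [map_smul, comp_mulRight_smul]

lemma rS_one (f : Module.Dual k A) : rS f 1 = f := by
  refine LinearMap.ext fun x => ?_
  rw [rS_apply, antipode_one_eq, mul_one]

lemma rS_rS (f : Module.Dual k A) (u v : A) : rS (rS f u) v = rS f (u * v) := by
  refine LinearMap.ext fun x => ?_
  simp only [rS_apply, antipode_mul_rev, mul_assoc]

lemma rS_sum {γ : Type*} (s : Finset γ) (f : Module.Dual k A) (h : γ → A) :
    rS f (∑ t ∈ s, h t) = ∑ t ∈ s, rS f (h t) := by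
  classical
  induction s using Finset.induction_on with
  | empty => simp [rS]
  | insert _ _ hne ih =>
      rw [Finset.sum_insert hne, Finset.sum_insert hne, rS_add_right, ih]

/-- The Hopf-module exchange law in convolution form:
`η * (f ↽ h) = ∑ ((η ∘ R_{h₂}) * f) ↽ h₁`. -/
lemma ha (η f : Module.Dual k A) {h : A} {ιh : Type*} (Rh : Coalgebra.Repr k h ιh) :
    conv η (rS f h)
      = ∑ t ∈ Rh.index,
          rS (conv (η ∘ₗ LinearMap.mulRight k (Rh.right t)) f) (Rh.left t) := by
  classical
  refine LinearMap.ext fun x => ?_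
  set Rx := Coalgebra.Repr.arbitrary k x with hRx
  set T : A →ₗ[k] A →ₗ[k] A →ₗ[k] k := mk3
    (fun a b c => ∑ s ∈ Rx.index,
      η (Rx.left s * (HopfAlgebra.antipode (R := k) b * c))
        * f (Rx.right s * HopfAlgebra.antipode (R := k) a))
    (fun b c => by
      refine ⟨fun a a' => ?_, fun m a => ?_⟩
      · rw [← Finset.sum_add_distrib]
        refine Finset.sum_congr rfl fun s _ => ?_
        rw [map_add, mul_add, map_add, mul_add]
      · rw [Finset.smul_sum]
        refine Finset.sum_congr rfl fun s _ => ?_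
        rw [map_smul, mul_smul_comm, map_smul, smul_eq_mul, smul_eq_mul]
        ring)
    (fun a c => by
      refine ⟨fun b b' => ?_, fun m b => ?_⟩
      · rw [← Finset.sum_add_distrib]
        refine Finset.sum_congr rfl fun s _ => ?_
        rw [map_add, add_mul, mul_add, map_add, add_mul]
      · rw [Finset.smul_sum]
        refine Finset.sum_congr rfl fun s _ => ?_
        rw [map_smul, smul_mul_assoc, mul_smul_comm, map_smul, smul_eq_mul, smul_eq_mul]
        ring)
    (fun a b => by
      refine ⟨fun c c' => ?_, fun m c => ?_⟩
      · rw [← Finset.sum_add_distrib]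
        refine Finset.sum_congr rfl fun s _ => ?_
        rw [mul_add, mul_add, map_add, add_mul]
      · rw [Finset.smul_sum]
        refine Finset.sum_congr rfl fun s _ => ?_
        rw [mul_smul_comm, mul_smul_comm, map_smul, smul_eq_mul, smul_eq_mul]
        ring) with hT
  have hTapply : ∀ a b c : A, T a b c = ∑ s ∈ Rx.index,
      η (Rx.left s * (HopfAlgebra.antipode (R := k) b * c))
        * f (Rx.right s * HopfAlgebra.antipode (R := k) a) := fun a b c => rfl
  -- right-hand side computation
  have hRHS : ∀ t ∈ Rh.index,
      rS (conv (η ∘ₗ LinearMap.mulRight k (Rh.right t)) f) (Rh.left t) x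
        = ∑ u ∈ (Coalgebra.Repr.arbitrary k (Rh.left t)).index,
            T ((Coalgebra.Repr.arbitrary k (Rh.left t)).left u)
              ((Coalgebra.Repr.arbitrary k (Rh.left t)).right u) (Rh.right t) := by
    intro t _
    set RL := Coalgebra.Repr.arbitrary k (Rh.left t) with hRL
    rw [rS_apply,
      conv_apply_repr _ _ (Coalgebra.Repr.mulRepr Rx (Coalgebra.Repr.antipodeRepr RL))]
    simp only [Coalgebra.Repr.mulRepr, Coalgebra.Repr.antipodeRepr]
    rw [Finset.sum_product]
    rw [Finset.sum_comm]
    refine Finset.sum_congr rfl fun u _ => ?_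
    rw [hTapply]
    refine Finset.sum_congr rfl fun s _ => ?_
    simp only [LinearMap.comp_apply, LinearMap.mulRight_apply]
    rw [mul_assoc]
  rw [LinearMap.sum_apply, Finset.sum_congr rfl hRHS,
    coassoc_transport3 T Rh (fun t => Coalgebra.Repr.arbitrary k (Rh.left t))
      (fun t => Coalgebra.Repr.arbitrary k (Rh.right t))]
  -- now contract the inner antipode sums
  have hcontract : ∀ t ∈ Rh.index,
      ∑ v ∈ (Coalgebra.Repr.arbitrary k (Rh.right t)).index,
          T (Rh.left t) ((Coalgebra.Repr.arbitrary k (Rh.right t)).left v)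
            ((Coalgebra.Repr.arbitrary k (Rh.right t)).right v)
        = ∑ s ∈ Rx.index, Coalgebra.counit (R := k) (Rh.right t) •
            (η (Rx.left s) * f (Rx.right s * HopfAlgebra.antipode (R := k) (Rh.left t))) := by
    intro t _
    set RR := Coalgebra.Repr.arbitrary k (Rh.right t) with hRR
    simp only [hTapply]
    rw [Finset.sum_comm]
    refine Finset.sum_congr rfl fun s _ => ?_
    rw [← Finset.sum_mul, ← smul_mul_assoc]
    congr 1
    calc ∑ v ∈ RR.index,
          η (Rx.left s * (HopfAlgebra.antipode (R := k) (RR.left v) * RR.right v))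
        = η (Rx.left s * ∑ v ∈ RR.index,
            HopfAlgebra.antipode (R := k) (RR.left v) * RR.right v) := by
          rw [Finset.mul_sum, map_sum]
      _ = Coalgebra.counit (R := k) (Rh.right t) • η (Rx.left s) := by
          rw [HopfAlgebra.sum_antipode_mul_eq_smul RR, mul_smul_comm, mul_one, map_smul,
            smul_eq_mul]
  rw [Finset.sum_congr rfl hcontract, Finset.sum_comm]
  -- finally contract the counit sum
  rw [conv_apply_repr _ _ Rx]
  refine Finset.sum_congr rfl fun s _ => Eq.symm ?_
  calc ∑ t ∈ Rh.index, Coalgebra.counit (R := k) (Rh.right t) •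
        (η (Rx.left s) * f (Rx.right s * HopfAlgebra.antipode (R := k) (Rh.left t)))
      = η (Rx.left s) * f (Rx.right s * HopfAlgebra.antipode (R := k)
          (∑ t ∈ Rh.index, Coalgebra.counit (R := k) (Rh.right t) • Rh.left t)) := by
        rw [map_sum, Finset.mul_sum, map_sum, Finset.mul_sum]
        refine Finset.sum_congr rfl fun t _ => ?_
        rw [map_smul, mul_smul_comm, map_smul, mul_smul_comm, smul_eq_mul]
    _ = η (Rx.left s) * rS f h (Rx.right s) := by
        rw [sum_smul_counit Rh, rS_apply]

end HopfModule
section Projector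

variable {k A : Type} [Field k] [Ring A] [HopfAlgebra k A]

open Coalgebra HopfAlgebra

/-- `conv φ ·` as a linear map. -/
noncomputable def convR (φ : Module.Dual k A) : Module.Dual k A →ₗ[k] Module.Dual k A where
  toFun := fun ψ => conv φ ψ
  map_add' := fun ψ ψ' => conv_add_right φ ψ ψ'
  map_smul' := fun c ψ => conv_smul_right c φ ψ

/-- `rS · h` as a linear map. -/
noncomputable def rSL (h : A) : Module.Dual k A →ₗ[k] Module.Dual k A where
  toFun := fun f => rS f h
  map_add' := fun f g => rS_add_left f g h
  map_smul' := fun c f => rS_smul_left c f h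

/-- `rS f ·` as a linear map. -/
noncomputable def rSflip (f : Module.Dual k A) : A →ₗ[k] Module.Dual k A where
  toFun := rS f
  map_add' := rS_add_right f
  map_smul' := fun c h => rS_smul_right c f h

lemma conv_sum_right {γ : Type*} (φ : Module.Dual k A) (s : Finset γ)
    (g : γ → Module.Dual k A) : conv φ (∑ t ∈ s, g t) = ∑ t ∈ s, conv φ (g t) :=
  map_sum (convR φ) g s

lemma conv_sum_left {γ : Type*} (s : Finset γ) (g : γ → Module.Dual k A)
    (ψ : Module.Dual k A) : conv (∑ t ∈ s, g t) ψ = ∑ t ∈ s, conv (g t) ψ := by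
  classical
  induction s using Finset.induction_on with
  | empty =>
      rw [Finset.sum_empty, Finset.sum_empty]
      have : conv ((0 : k) • (0 : Module.Dual k A)) ψ = (0 : k) • conv 0 ψ :=
        conv_smul_left 0 0 ψ
      simpa using this
  | insert _ _ hne ih =>
      rw [Finset.sum_insert hne, Finset.sum_insert hne, conv_add_left, ih]

lemma rS_sum_left {γ : Type*} (s : Finset γ) (f : γ → Module.Dual k A) (h : A) :
    rS (∑ t ∈ s, f t) h = ∑ t ∈ s, rS (f t) h :=
  map_sum (rSL h) f s

variable {ι : Type} [Fintype ι]

/-- The Hopf-module projector `P(m) = ∑ (eᵢ* * m) ↽ S(eᵢ)` onto the coinvariants. -/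
noncomputable def PP (e : Module.Basis ι k A) : Module.Dual k A →ₗ[k] Module.Dual k A :=
  ∑ i, (rSL (HopfAlgebra.antipode (R := k) (e i))) ∘ₗ (convR (e.coord i))

lemma PP_apply (e : Module.Basis ι k A) (m : Module.Dual k A) :
    PP e m = ∑ i, rS (conv (e.coord i) m) (HopfAlgebra.antipode (R := k) (e i)) := by
  rw [PP, LinearMap.sum_apply]
  rfl

/-- `χ = ∑ (η ∘ R_{S eₚ}) * eₚ* = η(1) ε`. -/
lemma chi_eq (e : Module.Basis ι k A) (η : Module.Dual k A) :
    ∑ p, conv (η ∘ₗ LinearMap.mulRight k (HopfAlgebra.antipode (R := k) (e p))) (e.coord p)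
      = η 1 • (Coalgebra.counit (R := k) : Module.Dual k A) := by
  refine LinearMap.ext fun y => ?_
  set Ry := Coalgebra.Repr.arbitrary k y
  rw [LinearMap.sum_apply]
  calc ∑ p, conv (η ∘ₗ LinearMap.mulRight k (HopfAlgebra.antipode (R := k) (e p)))
        (e.coord p) y
      = ∑ p, ∑ s ∈ Ry.index,
          e.coord p (Ry.right s) • η (Ry.left s * HopfAlgebra.antipode (R := k) (e p)) := by
        refine Finset.sum_congr rfl fun p _ => ?_
        rw [conv_apply_repr _ _ Ry]
        refine Finset.sum_congr rfl fun s _ => ?_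
        simp only [LinearMap.comp_apply, LinearMap.mulRight_apply, smul_eq_mul]
        ring
    _ = ∑ s ∈ Ry.index, η (Ry.left s * HopfAlgebra.antipode (R := k) (Ry.right s)) := by
        rw [Finset.sum_comm]
        refine Finset.sum_congr rfl fun s _ => ?_
        exact db1 e (η ∘ₗ (LinearMap.mulLeft k (Ry.left s))
          ∘ₗ (HopfAlgebra.antipode (R := k))) (Ry.right s)
    _ = η (∑ s ∈ Ry.index, Ry.left s * HopfAlgebra.antipode (R := k) (Ry.right s)) := by
        rw [map_sum]
    _ = (η 1 • (Coalgebra.counit (R := k) : Module.Dual k A)) y := by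
        rw [HopfAlgebra.sum_mul_antipode_eq_smul Ry, map_smul]
        simp only [LinearMap.smul_apply, smul_eq_mul]
        ring

/-- Coinvariance of the image of the projector (`F3`). -/
lemma coinv_PP (e : Module.Basis ι k A) (η m : Module.Dual k A) :
    conv η (PP e m) = η 1 • PP e m := by
  classical
  rw [PP_apply, conv_sum_right]
  have step1 : ∀ i, conv η (rS (conv (e.coord i) m) (HopfAlgebra.antipode (R := k) (e i)))
      = ∑ t ∈ (Coalgebra.Repr.arbitrary k (e i)).index,
          rS (conv (conv (η ∘ₗ LinearMap.mulRight k
                (HopfAlgebra.antipode (R := k) ((Coalgebra.Repr.arbitrary k (e i)).left t)))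
              (e.coord i)) m)
            (HopfAlgebra.antipode (R := k) ((Coalgebra.Repr.arbitrary k (e i)).right t)) := by
    intro i
    rw [ha η _ (Coalgebra.Repr.antipodeRepr (Coalgebra.Repr.arbitrary k (e i)))]
    simp only [Coalgebra.Repr.antipodeRepr]
    refine Finset.sum_congr rfl fun t _ => ?_
    rw [conv_assoc]
  rw [Finset.sum_congr rfl fun i _ => step1 i]
  rw [db2 e (fun φ a b => rS (conv (conv (η ∘ₗ LinearMap.mulRight k
        (HopfAlgebra.antipode (R := k) a)) φ) m) (HopfAlgebra.antipode (R := k) b))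
    (fun a b => ⟨fun φ φ' => by rw [conv_add_right, conv_add_left, rS_add_left],
                 fun c φ => by rw [conv_smul_right, conv_smul_left, rS_smul_left]⟩)
    (fun φ b => ⟨fun a a' => by
        rw [map_add, comp_mulRight_add, conv_add_left, conv_add_left, rS_add_left],
      fun c a => by
        rw [map_smul, comp_mulRight_smul, conv_smul_left, conv_smul_left, rS_smul_left]⟩)
    (fun φ a => ⟨fun b b' => by rw [map_add, rS_add_right],
                 fun c b => by rw [map_smul, rS_smul_right]⟩)
    (fun i => Coalgebra.Repr.arbitrary k (e i))]
  have regroup : ∀ p q : ι,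
      rS (conv (conv (η ∘ₗ LinearMap.mulRight k (HopfAlgebra.antipode (R := k) (e p)))
          (conv (e.coord p) (e.coord q))) m) (HopfAlgebra.antipode (R := k) (e q))
        = rS (conv (conv (η ∘ₗ LinearMap.mulRight k
            (HopfAlgebra.antipode (R := k) (e p))) (e.coord p)) (conv (e.coord q) m))
            (HopfAlgebra.antipode (R := k) (e q)) := by
    intro p q
    rw [← conv_assoc, conv_assoc]
  rw [Finset.sum_congr rfl fun p _ => Finset.sum_congr rfl fun q _ => regroup p q]
  rw [Finset.sum_comm]
  calc ∑ q, ∑ p, rS (conv (conv (η ∘ₗ LinearMap.mulRight k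
          (HopfAlgebra.antipode (R := k) (e p))) (e.coord p)) (conv (e.coord q) m))
          (HopfAlgebra.antipode (R := k) (e q))
      = ∑ q, rS (conv (∑ p, conv (η ∘ₗ LinearMap.mulRight k
          (HopfAlgebra.antipode (R := k) (e p))) (e.coord p)) (conv (e.coord q) m))
          (HopfAlgebra.antipode (R := k) (e q)) := by
        refine Finset.sum_congr rfl fun q _ => ?_
        rw [conv_sum_left, rS_sum_left]
    _ = η 1 • ∑ i, rS (conv (e.coord i) m) (HopfAlgebra.antipode (R := k) (e i)) := by
        rw [chi_eq e η, Finset.smul_sum]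
        refine Finset.sum_congr rfl fun q _ => ?_
        rw [conv_smul_left, conv_counit_left, rS_smul_left]

/-- `P (g ↽ h) = ε(h) g` for coinvariant `g` (`F4`). -/
lemma PP_rS_coinv (e : Module.Basis ι k A) (g : Module.Dual k A)
    (hg : ∀ η : Module.Dual k A, conv η g = η 1 • g) (h : A) :
    PP e (rS g h) = Coalgebra.counit (R := k) h • g := by
  classical
  set Rh := Coalgebra.Repr.arbitrary k h
  have expand : ∀ i, conv (e.coord i) (rS g h)
      = ∑ t ∈ Rh.index, e.coord i (Rh.right t) • rS g (Rh.left t) := by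
    intro i
    rw [ha _ _ Rh]
    refine Finset.sum_congr rfl fun t _ => ?_
    rw [hg, rS_smul_left]
    simp only [LinearMap.comp_apply, LinearMap.mulRight_apply, one_mul]
  rw [PP_apply]
  calc ∑ i, rS (conv (e.coord i) (rS g h)) (HopfAlgebra.antipode (R := k) (e i))
      = ∑ i, ∑ t ∈ Rh.index, e.coord i (Rh.right t) •
          rS (rS g (Rh.left t)) (HopfAlgebra.antipode (R := k) (e i)) := by
        refine Finset.sum_congr rfl fun i _ => ?_
        rw [expand i, rS_sum_left]
        exact Finset.sum_congr rfl fun t _ => rS_smul_left _ _ _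
    _ = ∑ t ∈ Rh.index, rS g (Rh.left t * HopfAlgebra.antipode (R := k) (Rh.right t)) := by
        rw [Finset.sum_comm]
        refine Finset.sum_congr rfl fun t _ => ?_
        have := db1 e ((rSflip (rS g (Rh.left t))) ∘ₗ (HopfAlgebra.antipode (R := k)))
          (Rh.right t)
        simp only [LinearMap.comp_apply, rSflip, LinearMap.coe_mk, AddHom.coe_mk] at this
        rw [this, rS_rS]
    _ = Coalgebra.counit (R := k) h • g := by
        rw [← rS_sum, HopfAlgebra.sum_mul_antipode_eq_smul Rh, rS_smul_right, rS_one]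

/-- Recovery (`F1`): `∑ (P (eᵢ* * m)) ↽ eᵢ = m`. -/
lemma PP_recover (e : Module.Basis ι k A) (m : Module.Dual k A) :
    ∑ i, rS (PP e (conv (e.coord i) m)) (e i) = m := by
  classical
  have expand : ∀ i, rS (PP e (conv (e.coord i) m)) (e i)
      = ∑ j, rS (conv (conv (e.coord j) (e.coord i)) m)
          (HopfAlgebra.antipode (R := k) (e j) * (e i)) := by
    intro i
    rw [PP_apply, rS_sum_left]
    refine Finset.sum_congr rfl fun j _ => ?_
    rw [rS_rS, ← conv_assoc]
  rw [Finset.sum_congr rfl fun i _ => expand i, Finset.sum_comm]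
  rw [← db2 e (fun φ a b => rS (conv φ m) (HopfAlgebra.antipode (R := k) a * b))
    (fun a b => ⟨fun φ φ' => by rw [conv_add_left, rS_add_left],
                 fun c φ => by rw [conv_smul_left, rS_smul_left]⟩)
    (fun φ b => ⟨fun a a' => by rw [map_add, add_mul, rS_add_right],
      fun c a => by rw [map_smul, smul_mul_assoc, rS_smul_right]⟩)
    (fun φ a => ⟨fun b b' => by rw [mul_add, rS_add_right],
                 fun c b => by rw [mul_smul_comm, rS_smul_right]⟩)
    (fun j => Coalgebra.Repr.arbitrary k (e j))]
  calc ∑ j, ∑ t ∈ (Coalgebra.Repr.arbitrary k (e j)).index,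
        rS (conv (e.coord j) m)
          (HopfAlgebra.antipode (R := k) ((Coalgebra.Repr.arbitrary k (e j)).left t)
            * (Coalgebra.Repr.arbitrary k (e j)).right t)
      = ∑ j, rS (conv (e.coord j) m)
          (∑ t ∈ (Coalgebra.Repr.arbitrary k (e j)).index,
            HopfAlgebra.antipode (R := k) ((Coalgebra.Repr.arbitrary k (e j)).left t)
              * (Coalgebra.Repr.arbitrary k (e j)).right t) := by
        refine Finset.sum_congr rfl fun j _ => (rS_sum _ _ _).symm
    _ = ∑ j, Coalgebra.counit (R := k) (e j) • conv (e.coord j) m := by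
        refine Finset.sum_congr rfl fun j _ => ?_
        rw [HopfAlgebra.sum_antipode_mul_eq_smul (Coalgebra.Repr.arbitrary k (e j)),
          rS_smul_right, rS_one]
    _ = conv (∑ j, Coalgebra.counit (R := k) (e j) • e.coord j) m := by
        rw [conv_sum_left]
        refine Finset.sum_congr rfl fun j _ => (conv_smul_left _ _ _).symm
    _ = m := by
        rw [dual_expand e (Coalgebra.counit (R := k)), conv_counit_left]

end Projector
section AntipodeBijective

variable {k A : Type} [Field k] [Ring A] [HopfAlgebra k A]

open Coalgebra HopfAlgebra

lemma rS_zero (h : A) : rS (0 : Module.Dual k A) h = 0 :=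
  LinearMap.zero_comp _

/-- The antipode of a finite-dimensional Hopf algebra is bijective. -/
lemma antipode_bijective [FiniteDimensional k A] :
    Function.Bijective (HopfAlgebra.antipode (R := k) (A := A)) := by
  classical
  by_cases hs : Subsingleton A
  · exact ⟨fun a b _ => Subsingleton.elim a b, fun a => ⟨a, Subsingleton.elim _ _⟩⟩
  haveI : Nontrivial A := not_subsingleton_iff_nontrivial.mp hs
  set e := Module.Basis.ofVectorSpace k A with he
  suffices inj : Function.Injective (HopfAlgebra.antipode (R := k) (A := A)) by
    exact ⟨inj, (LinearMap.injective_iff_surjective).mp inj⟩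
  -- find a nonzero coinvariant
  have hexists : ∃ g : Module.Dual k A, PP e g ≠ 0 := by
    by_contra hno
    push_neg at hno
    have h0 := PP_recover e (Coalgebra.counit (R := k))
    rw [Finset.sum_congr rfl fun i _ => by rw [hno (conv (e.coord i)
      (Coalgebra.counit (R := k))), rS_zero]] at h0
    rw [Finset.sum_const, smul_zero] at h0
    have h1 : Coalgebra.counit (R := k) (1 : A) = (0 : Module.Dual k A) (1 : A) := by
      rw [h0]
    rw [Bialgebra.counit_one, LinearMap.zero_apply] at h1
    exact one_ne_zero h1
  obtain ⟨g, hg⟩ := hexists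
  set lam := PP e g with hlam
  have hcoinv : ∀ η : Module.Dual k A, conv η lam = η 1 • lam := fun η => coinv_PP e η g
  obtain ⟨x0, hx0⟩ : ∃ x0 : A, lam x0 ≠ 0 := by
    by_contra hno
    push_neg at hno
    exact hg (LinearMap.ext fun x => hno x)
  have recover : ∀ (θ : Module.Dual k A) (h : A),
      PP e (conv θ (rS lam h)) = θ h • lam := by
    intro θ h
    set Rh := Coalgebra.Repr.arbitrary k h
    have step : conv θ (rS lam h) = ∑ t ∈ Rh.index, θ (Rh.right t) • rS lam (Rh.left t) := by
      rw [ha θ lam Rh]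
      refine Finset.sum_congr rfl fun t _ => ?_
      rw [hcoinv, rS_smul_left]
      simp only [LinearMap.comp_apply, LinearMap.mulRight_apply, one_mul]
    rw [step, map_sum]
    calc ∑ t ∈ Rh.index, PP e (θ (Rh.right t) • rS lam (Rh.left t))
        = ∑ t ∈ Rh.index, θ (Rh.right t) •
            (Coalgebra.counit (R := k) (Rh.left t) • lam) := by
          refine Finset.sum_congr rfl fun t _ => ?_
          rw [map_smul, PP_rS_coinv e lam hcoinv (Rh.left t)]
      _ = θ h • lam := by
          have hθh : θ h = ∑ t ∈ Rh.index,
              Coalgebra.counit (R := k) (Rh.left t) * θ (Rh.right t) := by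
            conv_lhs => rw [← _root_.sum_counit_smul Rh]
            rw [map_sum]
            exact Finset.sum_congr rfl fun t _ => by rw [map_smul, smul_eq_mul]
          rw [hθh, Finset.sum_smul]
          refine Finset.sum_congr rfl fun t _ => ?_
          rw [smul_smul, mul_comm]
  intro u v huv
  have hru : rS lam u = rS lam v := by
    unfold rS
    rw [huv]
  have hθ : ∀ θ : Module.Dual k A, θ u = θ v := by
    intro θ
    have h2 : θ u • lam = θ v • lam := by
      rw [← recover θ u, ← recover θ v, hru]
    have h3 := congrArg (fun φ : Module.Dual k A => φ x0) h2
    simp only [LinearMap.smul_apply, smul_eq_mul] at h3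
    exact mul_right_cancel₀ hx0 h3
  have hz : ∀ θ : Module.Dual k A, θ (u - v) = 0 := by
    intro θ
    rw [map_sub, hθ θ, sub_self]
  have := (Module.forall_dual_apply_eq_zero_iff k (u - v)).mp hz
  exact sub_eq_zero.mp this

end AntipodeBijective
section FinalAssembly

variable {k A : Type} [Field k] [Ring A] [HopfAlgebra k A]

open Coalgebra HopfAlgebra

section WithBasis

variable [FiniteDimensional k A]

/-- The inverse of the antipode. -/
noncomputable def Sinv : A →ₗ[k] A :=
  ((LinearEquiv.ofBijective (HopfAlgebra.antipode (R := k) (A := A))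
    antipode_bijective).symm).toLinearMap

lemma antipode_Sinv (x : A) :
    HopfAlgebra.antipode (R := k) (Sinv (k := k) x) = x :=
  (LinearEquiv.ofBijective (HopfAlgebra.antipode (R := k))
    antipode_bijective).apply_symm_apply x

lemma Sinv_antipode (x : A) :
    Sinv (k := k) (HopfAlgebra.antipode (R := k) x) = x :=
  (LinearEquiv.ofBijective (HopfAlgebra.antipode (R := k))
    antipode_bijective).symm_apply_apply x

/-- `∑ S⁻¹(x₂) x₁ = ε(x) 1`. -/
lemma sum_Sinv_mul_eq {c : A} {ιr : Type*} (r : Coalgebra.Repr k c ιr) :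
    ∑ t ∈ r.index, Sinv (k := k) (r.right t) * r.left t
      = Coalgebra.counit (R := k) c • (1 : A) := by
  apply (antipode_bijective (k := k) (A := A)).1 (a₁ := ∑ t ∈ r.index, Sinv (k := k) (r.right t) * r.left t)
  rw [map_sum, map_smul, antipode_one_eq]
  calc ∑ t ∈ r.index, HopfAlgebra.antipode (R := k) (Sinv (k := k) (r.right t) * r.left t)
      = ∑ t ∈ r.index, HopfAlgebra.antipode (R := k) (r.left t) * r.right t := by
        refine Finset.sum_congr rfl fun t _ => ?_
        rw [antipode_mul_rev, antipode_Sinv]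
    _ = Coalgebra.counit (R := k) c • (1 : A) := HopfAlgebra.sum_antipode_mul_eq_smul r

/-- `∑ x₂ S⁻¹(x₁) = ε(x) 1`. -/
lemma sum_mul_Sinv_eq {c : A} {ιr : Type*} (r : Coalgebra.Repr k c ιr) :
    ∑ t ∈ r.index, r.right t * Sinv (k := k) (r.left t)
      = Coalgebra.counit (R := k) c • (1 : A) := by
  apply (antipode_bijective (k := k) (A := A)).1 (a₁ := ∑ t ∈ r.index, r.right t * Sinv (k := k) (r.left t))
  rw [map_sum, map_smul, antipode_one_eq]
  calc ∑ t ∈ r.index, HopfAlgebra.antipode (R := k) (r.right t * Sinv (k := k) (r.left t))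
      = ∑ t ∈ r.index, r.left t * HopfAlgebra.antipode (R := k) (r.right t) := by
        refine Finset.sum_congr rfl fun t _ => ?_
        rw [antipode_mul_rev, antipode_Sinv]
    _ = Coalgebra.counit (R := k) c • (1 : A) := HopfAlgebra.sum_mul_antipode_eq_smul r

end WithBasis

variable {ι : Type} [Fintype ι]

/-- The rank-one operator `φ ↦ φ(a) ψ`. -/
noncomputable def rk1 (ψ : Module.Dual k A) (a : A) :
    Module.End k (Module.Dual k A) where
  toFun := fun φ => φ a • ψ
  map_add' := fun φ φ' => by simp [add_smul]
  map_smul' := fun c φ => by simp [smul_smul]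

/-- The "standard matrix units" map `Dual ⊗ A → End (Dual)`. -/
noncomputable def jmap : (Module.Dual k A) ⊗[k] A →ₗ[k] Module.End k (Module.Dual k A) :=
  TensorProduct.lift
    { toFun := fun ψ =>
        { toFun := fun a => rk1 ψ a
          map_add' := fun a a' => LinearMap.ext fun φ => by simp [rk1, add_smul]
          map_smul' := fun c a => LinearMap.ext fun φ => by simp [rk1, smul_smul, mul_comm] }
      map_add' := fun ψ ψ' => LinearMap.ext fun a => LinearMap.ext fun φ => by
        simp [rk1, smul_add]
      map_smul' := fun c ψ => LinearMap.ext fun a => LinearMap.ext fun φ => by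
        simp [rk1, smul_smul, mul_comm] }

lemma jmap_tmul (ψ : Module.Dual k A) (a : A) (φ : Module.Dual k A) :
    jmap (ψ ⊗ₜ[k] a) φ = φ a • ψ := rfl

/-- Inverse of `jmap` (given a finite basis). -/
noncomputable def jinv (e : Module.Basis ι k A) :
    Module.End k (Module.Dual k A) →ₗ[k] (Module.Dual k A) ⊗[k] A where
  toFun := fun u => ∑ i, u (e.coord i) ⊗ₜ[k] e i
  map_add' := fun u v => by
    rw [← Finset.sum_add_distrib]
    exact Finset.sum_congr rfl fun i _ => by
      rw [LinearMap.add_apply, TensorProduct.add_tmul]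
  map_smul' := fun c u => by
    rw [RingHom.id_apply, Finset.smul_sum]
    exact Finset.sum_congr rfl fun i _ => by
      rw [LinearMap.smul_apply, TensorProduct.smul_tmul']

lemma jmap_jinv (e : Module.Basis ι k A) (u : Module.End k (Module.Dual k A)) :
    jmap (jinv e u) = u := by
  refine LinearMap.ext fun φ => ?_
  rw [jinv]
  simp only [LinearMap.coe_mk, AddHom.coe_mk, map_sum, LinearMap.sum_apply]
  calc ∑ i, jmap (u (e.coord i) ⊗ₜ[k] e i) φ
      = ∑ i, φ (e i) • u (e.coord i) := by
        exact Finset.sum_congr rfl fun i _ => jmap_tmul _ _ _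
    _ = u φ := db1' e u φ

lemma jinv_jmap (e : Module.Basis ι k A) : (jinv e) ∘ₗ (jmap (k := k) (A := A)) = LinearMap.id := by
  apply TensorProduct.ext'
  intro ψ a
  simp only [LinearMap.comp_apply, LinearMap.id_apply]
  rw [jinv]
  simp only [LinearMap.coe_mk, AddHom.coe_mk]
  calc ∑ i, (jmap (ψ ⊗ₜ[k] a)) (e.coord i) ⊗ₜ[k] e i
      = ∑ i, ψ ⊗ₜ[k] (e.coord i a • e i) := by
        refine Finset.sum_congr rfl fun i _ => ?_
        rw [jmap_tmul, TensorProduct.smul_tmul]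
    _ = ψ ⊗ₜ[k] a := by
        rw [← TensorProduct.tmul_sum]
        congr 1
        exact e.sum_repr a

lemma jmap_bijective (e : Module.Basis ι k A) :
    Function.Bijective (jmap (k := k) (A := A)) := by
  constructor
  · intro s t hst
    have h1 := LinearMap.congr_fun (jinv_jmap e) s
    have h2 := LinearMap.congr_fun (jinv_jmap e) t
    simp only [LinearMap.comp_apply, LinearMap.id_apply] at h1 h2
    rw [← h1, ← h2, hst]
  · intro u
    exact ⟨jinv e u, jmap_jinv e u⟩

end FinalAssembly
section RCmaps

variable {k A : Type} [Field k] [Ring A] [HopfAlgebra k A]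
variable [FiniteDimensional k A]
variable {ι : Type} [Fintype ι]

open Coalgebra HopfAlgebra

/-- Right multiplication by the canonical element: `ψ ⊗ h ↦ ∑ (ψ * eᵢ*) ⊗ (eᵢ h)`. -/
noncomputable def RC (e : Module.Basis ι k A) :
    (Module.Dual k A) ⊗[k] A →ₗ[k] (Module.Dual k A) ⊗[k] A :=
  TensorProduct.lift
    { toFun := fun ψ =>
        { toFun := fun h => ∑ i, conv ψ (e.coord i) ⊗ₜ[k] (e i * h)
          map_add' := fun h h' => by
            rw [← Finset.sum_add_distrib]
            exact Finset.sum_congr rfl fun i _ => by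
              rw [mul_add, TensorProduct.tmul_add]
          map_smul' := fun c h => by
            rw [RingHom.id_apply, Finset.smul_sum]
            exact Finset.sum_congr rfl fun i _ => by
              rw [mul_smul_comm, TensorProduct.tmul_smul] }
      map_add' := fun ψ ψ' => LinearMap.ext fun h => by
        simp only [LinearMap.coe_mk, AddHom.coe_mk, LinearMap.add_apply]
        rw [← Finset.sum_add_distrib]
        exact Finset.sum_congr rfl fun i _ => by
          rw [conv_add_left, TensorProduct.add_tmul]
      map_smul' := fun c ψ => LinearMap.ext fun h => by
        simp only [LinearMap.coe_mk, AddHom.coe_mk, LinearMap.smul_apply, RingHom.id_apply]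
        rw [Finset.smul_sum]
        exact Finset.sum_congr rfl fun i _ => by
          rw [conv_smul_left, TensorProduct.smul_tmul'] }

lemma RC_tmul (e : Module.Basis ι k A) (ψ : Module.Dual k A) (h : A) :
    RC e (ψ ⊗ₜ[k] h) = ∑ i, conv ψ (e.coord i) ⊗ₜ[k] (e i * h) := rfl

/-- Right multiplication by the inverse canonical element:
`ψ ⊗ h ↦ ∑ (ψ * eᵢ*) ⊗ (S⁻¹(eᵢ) h)`. -/
noncomputable def RC' (e : Module.Basis ι k A) :
    (Module.Dual k A) ⊗[k] A →ₗ[k] (Module.Dual k A) ⊗[k] A :=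
  TensorProduct.lift
    { toFun := fun ψ =>
        { toFun := fun h => ∑ i, conv ψ (e.coord i) ⊗ₜ[k] (Sinv (k := k) (e i) * h)
          map_add' := fun h h' => by
            rw [← Finset.sum_add_distrib]
            exact Finset.sum_congr rfl fun i _ => by
              rw [mul_add, TensorProduct.tmul_add]
          map_smul' := fun c h => by
            rw [RingHom.id_apply, Finset.smul_sum]
            exact Finset.sum_congr rfl fun i _ => by
              rw [mul_smul_comm, TensorProduct.tmul_smul] }
      map_add' := fun ψ ψ' => LinearMap.ext fun h => by
        simp only [LinearMap.coe_mk, AddHom.coe_mk, LinearMap.add_apply]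
        rw [← Finset.sum_add_distrib]
        exact Finset.sum_congr rfl fun i _ => by
          rw [conv_add_left, TensorProduct.add_tmul]
      map_smul' := fun c ψ => LinearMap.ext fun h => by
        simp only [LinearMap.coe_mk, AddHom.coe_mk, LinearMap.smul_apply, RingHom.id_apply]
        rw [Finset.smul_sum]
        exact Finset.sum_congr rfl fun i _ => by
          rw [conv_smul_left, TensorProduct.smul_tmul'] }

lemma RC'_tmul (e : Module.Basis ι k A) (ψ : Module.Dual k A) (h : A) :
    RC' e (ψ ⊗ₜ[k] h) = ∑ i, conv ψ (e.coord i) ⊗ₜ[k] (Sinv (k := k) (e i) * h) := rfl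

/-- Left inverse of `dualTensorHom`. -/
noncomputable def dthinv (e : Module.Basis ι k A) :
    (A →ₗ[k] A) →ₗ[k] (Module.Dual k A) ⊗[k] A where
  toFun := fun u => ∑ i, e.coord i ⊗ₜ[k] u (e i)
  map_add' := fun u v => by
    rw [← Finset.sum_add_distrib]
    exact Finset.sum_congr rfl fun i _ => by
      rw [LinearMap.add_apply, TensorProduct.tmul_add]
  map_smul' := fun c u => by
    rw [RingHom.id_apply, Finset.smul_sum]
    exact Finset.sum_congr rfl fun i _ => by
      rw [LinearMap.smul_apply, TensorProduct.tmul_smul]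

lemma dth_injective (e : Module.Basis ι k A) :
    Function.Injective (dualTensorHom k A A) := by
  have hleft : (dthinv e) ∘ₗ (dualTensorHom k A A) = LinearMap.id := by
    apply TensorProduct.ext'
    intro f a
    simp only [LinearMap.comp_apply, LinearMap.id_apply]
    rw [dthinv]
    simp only [LinearMap.coe_mk, AddHom.coe_mk]
    calc ∑ i, e.coord i ⊗ₜ[k] (dualTensorHom k A A) (f ⊗ₜ[k] a) (e i)
        = ∑ i, (f (e i) • e.coord i) ⊗ₜ[k] a := by
          refine Finset.sum_congr rfl fun i _ => ?_
          rw [dualTensorHom_apply, ← TensorProduct.smul_tmul]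
      _ = f ⊗ₜ[k] a := by
          rw [← TensorProduct.sum_tmul, dual_expand e f]
  intro s t hst
  have h1 := LinearMap.congr_fun hleft s
  have h2 := LinearMap.congr_fun hleft t
  simp only [LinearMap.comp_apply, LinearMap.id_apply] at h1 h2
  rw [← h1, ← h2, hst]

end RCmaps
section RCinverse

variable {k A : Type} [Field k] [Ring A] [HopfAlgebra k A]
variable [FiniteDimensional k A]
variable {ι : Type} [Fintype ι]

open Coalgebra HopfAlgebra

lemma dth_RC'_RC (e : Module.Basis ι k A) (ψ : Module.Dual k A) (h x : A) :
    dualTensorHom k A A (RC' e (RC e (ψ ⊗ₜ[k] h))) x = ψ x • h := by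
  classical
  set Rx := Coalgebra.Repr.arbitrary k x with hRx
  set T3 : A →ₗ[k] A →ₗ[k] A →ₗ[k] A := mk3
    (fun a b c => ψ a • (Sinv (k := k) c * (b * h)))
    (fun b c => ⟨fun a a' => by rw [map_add, add_smul],
                 fun m a => by rw [map_smul, smul_eq_mul, mul_smul]⟩)
    (fun a c => ⟨fun b b' => by rw [add_mul, mul_add, smul_add],
                 fun m b => by
                   rw [smul_mul_assoc, mul_smul_comm, smul_comm]⟩)
    (fun a b => ⟨fun c c' => by rw [map_add, add_mul, smul_add],
                 fun m c => by
                   rw [map_smul, smul_mul_assoc, smul_comm]⟩) with hT3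
  have hT3apply : ∀ a b c : A, T3 a b c = ψ a • (Sinv (k := k) c * (b * h)) :=
    fun a b c => rfl
  calc dualTensorHom k A A (RC' e (RC e (ψ ⊗ₜ[k] h))) x
      = ∑ i, ∑ j, conv (conv ψ (e.coord i)) (e.coord j) x
          • (Sinv (k := k) (e j) * (e i * h)) := by
        rw [RC_tmul, map_sum, map_sum, LinearMap.sum_apply]
        refine Finset.sum_congr rfl fun i _ => ?_
        rw [RC'_tmul, map_sum, LinearMap.sum_apply]
        exact Finset.sum_congr rfl fun j _ => by rw [dualTensorHom_apply]
    _ = ∑ i, ∑ s ∈ Rx.index, conv ψ (e.coord i) (Rx.left s)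
          • (Sinv (k := k) (Rx.right s) * (e i * h)) := by
        refine Finset.sum_congr rfl fun i _ => ?_
        calc ∑ j, conv (conv ψ (e.coord i)) (e.coord j) x
              • (Sinv (k := k) (e j) * (e i * h))
            = ∑ j, ∑ s ∈ Rx.index, conv ψ (e.coord i) (Rx.left s) •
                (e.coord j (Rx.right s) • (Sinv (k := k) (e j) * (e i * h))) := by
              refine Finset.sum_congr rfl fun j _ => ?_
              rw [conv_apply_repr _ _ Rx, Finset.sum_smul]
              exact Finset.sum_congr rfl fun s _ => by rw [mul_smul]
          _ = ∑ s ∈ Rx.index, conv ψ (e.coord i) (Rx.left s) •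
                (∑ j, e.coord j (Rx.right s) • (Sinv (k := k) (e j) * (e i * h))) := by
              rw [Finset.sum_comm]
              exact Finset.sum_congr rfl fun s _ => by rw [Finset.smul_sum]
          _ = ∑ s ∈ Rx.index, conv ψ (e.coord i) (Rx.left s)
                • (Sinv (k := k) (Rx.right s) * (e i * h)) := by
              refine Finset.sum_congr rfl fun s _ => ?_
              congr 1
              have := db1 e ((LinearMap.mulRight k (e i * h)) ∘ₗ (Sinv (k := k)))
                (Rx.right s)
              simpa only [LinearMap.comp_apply, LinearMap.mulRight_apply] using this
    _ = ∑ s ∈ Rx.index, ∑ u ∈ (Coalgebra.Repr.arbitrary k (Rx.left s)).index,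
          T3 ((Coalgebra.Repr.arbitrary k (Rx.left s)).left u)
            ((Coalgebra.Repr.arbitrary k (Rx.left s)).right u) (Rx.right s) := by
        rw [Finset.sum_comm]
        refine Finset.sum_congr rfl fun s _ => ?_
        calc ∑ i, conv ψ (e.coord i) (Rx.left s)
              • (Sinv (k := k) (Rx.right s) * (e i * h))
            = ∑ i, ∑ u ∈ (Coalgebra.Repr.arbitrary k (Rx.left s)).index,
                ψ ((Coalgebra.Repr.arbitrary k (Rx.left s)).left u) •
                  (e.coord i ((Coalgebra.Repr.arbitrary k (Rx.left s)).right u) •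
                    (Sinv (k := k) (Rx.right s) * (e i * h))) := by
              refine Finset.sum_congr rfl fun i _ => ?_
              rw [conv_apply_repr _ _ (Coalgebra.Repr.arbitrary k (Rx.left s)),
                Finset.sum_smul]
              exact Finset.sum_congr rfl fun u _ => by rw [mul_smul]
          _ = ∑ u ∈ (Coalgebra.Repr.arbitrary k (Rx.left s)).index,
                ψ ((Coalgebra.Repr.arbitrary k (Rx.left s)).left u) •
                  (∑ i, e.coord i ((Coalgebra.Repr.arbitrary k (Rx.left s)).right u) •
                    (Sinv (k := k) (Rx.right s) * (e i * h))) := by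
              rw [Finset.sum_comm]
              exact Finset.sum_congr rfl fun u _ => by rw [Finset.smul_sum]
          _ = ∑ u ∈ (Coalgebra.Repr.arbitrary k (Rx.left s)).index,
                T3 ((Coalgebra.Repr.arbitrary k (Rx.left s)).left u)
                  ((Coalgebra.Repr.arbitrary k (Rx.left s)).right u) (Rx.right s) := by
              refine Finset.sum_congr rfl fun u _ => ?_
              rw [hT3apply]
              congr 1
              have := db1 e ((LinearMap.mulLeft k (Sinv (k := k) (Rx.right s)))
                ∘ₗ (LinearMap.mulRight k h))
                ((Coalgebra.Repr.arbitrary k (Rx.left s)).right u)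
              simpa only [LinearMap.comp_apply, LinearMap.mulRight_apply,
                LinearMap.mulLeft_apply] using this
    _ = ∑ s ∈ Rx.index, ∑ v ∈ (Coalgebra.Repr.arbitrary k (Rx.right s)).index,
          T3 (Rx.left s) ((Coalgebra.Repr.arbitrary k (Rx.right s)).left v)
            ((Coalgebra.Repr.arbitrary k (Rx.right s)).right v) :=
        coassoc_transport3 T3 Rx (fun s => Coalgebra.Repr.arbitrary k (Rx.left s))
          (fun s => Coalgebra.Repr.arbitrary k (Rx.right s))
    _ = ∑ s ∈ Rx.index, (Coalgebra.counit (R := k) (Rx.right s) * ψ (Rx.left s)) • h := by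
        refine Finset.sum_congr rfl fun s _ => ?_
        calc ∑ v ∈ (Coalgebra.Repr.arbitrary k (Rx.right s)).index,
              T3 (Rx.left s) ((Coalgebra.Repr.arbitrary k (Rx.right s)).left v)
                ((Coalgebra.Repr.arbitrary k (Rx.right s)).right v)
            = ψ (Rx.left s) •
                ((∑ v ∈ (Coalgebra.Repr.arbitrary k (Rx.right s)).index,
                  Sinv (k := k) ((Coalgebra.Repr.arbitrary k (Rx.right s)).right v)
                    * (Coalgebra.Repr.arbitrary k (Rx.right s)).left v) * h) := by
              rw [Finset.sum_mul, Finset.smul_sum]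
              refine Finset.sum_congr rfl fun v _ => ?_
              rw [hT3apply, mul_assoc]
          _ = (Coalgebra.counit (R := k) (Rx.right s) * ψ (Rx.left s)) • h := by
              rw [sum_Sinv_mul_eq (Coalgebra.Repr.arbitrary k (Rx.right s)),
                smul_mul_assoc, one_mul, smul_smul, mul_comm]
    _ = ψ x • h := by
        rw [← Finset.sum_smul]
        congr 1
        calc ∑ s ∈ Rx.index, Coalgebra.counit (R := k) (Rx.right s) * ψ (Rx.left s)
            = ψ (∑ s ∈ Rx.index, Coalgebra.counit (R := k) (Rx.right s) • Rx.left s) := by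
              rw [map_sum]
              exact Finset.sum_congr rfl fun s _ => by rw [map_smul, smul_eq_mul]
          _ = ψ x := by rw [sum_smul_counit Rx]

end RCinverse
section RCinverseMirror

variable {k A : Type} [Field k] [Ring A] [HopfAlgebra k A]
variable [FiniteDimensional k A]
variable {ι : Type} [Fintype ι]

open Coalgebra HopfAlgebra

lemma dth_RC_RC' (e : Module.Basis ι k A) (ψ : Module.Dual k A) (h x : A) :
    dualTensorHom k A A (RC e (RC' e (ψ ⊗ₜ[k] h))) x = ψ x • h := by
  classical
  set Rx := Coalgebra.Repr.arbitrary k x with hRx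
  set T3 : A →ₗ[k] A →ₗ[k] A →ₗ[k] A := mk3
    (fun a b c => ψ a • (c * (Sinv (k := k) b * h)))
    (fun b c => ⟨fun a a' => by rw [map_add, add_smul],
                 fun m a => by rw [map_smul, smul_eq_mul, mul_smul]⟩)
    (fun a c => ⟨fun b b' => by rw [map_add, add_mul, mul_add, smul_add],
                 fun m b => by
                   rw [map_smul, smul_mul_assoc, mul_smul_comm, smul_comm]⟩)
    (fun a b => ⟨fun c c' => by rw [add_mul, smul_add],
                 fun m c => by
                   rw [smul_mul_assoc, smul_comm]⟩) with hT3
  have hT3apply : ∀ a b c : A, T3 a b c = ψ a • (c * (Sinv (k := k) b * h)) :=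
    fun a b c => rfl
  calc dualTensorHom k A A (RC e (RC' e (ψ ⊗ₜ[k] h))) x
      = ∑ i, ∑ j, conv (conv ψ (e.coord i)) (e.coord j) x
          • (e j * (Sinv (k := k) (e i) * h)) := by
        rw [RC'_tmul, map_sum, map_sum, LinearMap.sum_apply]
        refine Finset.sum_congr rfl fun i _ => ?_
        rw [RC_tmul, map_sum, LinearMap.sum_apply]
        exact Finset.sum_congr rfl fun j _ => by rw [dualTensorHom_apply]
    _ = ∑ i, ∑ s ∈ Rx.index, conv ψ (e.coord i) (Rx.left s)
          • (Rx.right s * (Sinv (k := k) (e i) * h)) := by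
        refine Finset.sum_congr rfl fun i _ => ?_
        calc ∑ j, conv (conv ψ (e.coord i)) (e.coord j) x
              • (e j * (Sinv (k := k) (e i) * h))
            = ∑ j, ∑ s ∈ Rx.index, conv ψ (e.coord i) (Rx.left s) •
                (e.coord j (Rx.right s) • (e j * (Sinv (k := k) (e i) * h))) := by
              refine Finset.sum_congr rfl fun j _ => ?_
              rw [conv_apply_repr _ _ Rx, Finset.sum_smul]
              exact Finset.sum_congr rfl fun s _ => by rw [mul_smul]
          _ = ∑ s ∈ Rx.index, conv ψ (e.coord i) (Rx.left s) •
                (∑ j, e.coord j (Rx.right s) • (e j * (Sinv (k := k) (e i) * h))) := by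
              rw [Finset.sum_comm]
              exact Finset.sum_congr rfl fun s _ => by rw [Finset.smul_sum]
          _ = ∑ s ∈ Rx.index, conv ψ (e.coord i) (Rx.left s)
                • (Rx.right s * (Sinv (k := k) (e i) * h)) := by
              refine Finset.sum_congr rfl fun s _ => ?_
              congr 1
              have := db1 e (LinearMap.mulRight k (Sinv (k := k) (e i) * h)) (Rx.right s)
              simpa only [LinearMap.mulRight_apply] using this
    _ = ∑ s ∈ Rx.index, ∑ u ∈ (Coalgebra.Repr.arbitrary k (Rx.left s)).index,
          T3 ((Coalgebra.Repr.arbitrary k (Rx.left s)).left u)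
            ((Coalgebra.Repr.arbitrary k (Rx.left s)).right u) (Rx.right s) := by
        rw [Finset.sum_comm]
        refine Finset.sum_congr rfl fun s _ => ?_
        calc ∑ i, conv ψ (e.coord i) (Rx.left s)
              • (Rx.right s * (Sinv (k := k) (e i) * h))
            = ∑ i, ∑ u ∈ (Coalgebra.Repr.arbitrary k (Rx.left s)).index,
                ψ ((Coalgebra.Repr.arbitrary k (Rx.left s)).left u) •
                  (e.coord i ((Coalgebra.Repr.arbitrary k (Rx.left s)).right u) •
                    (Rx.right s * (Sinv (k := k) (e i) * h))) := by
              refine Finset.sum_congr rfl fun i _ => ?_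
              rw [conv_apply_repr _ _ (Coalgebra.Repr.arbitrary k (Rx.left s)),
                Finset.sum_smul]
              exact Finset.sum_congr rfl fun u _ => by rw [mul_smul]
          _ = ∑ u ∈ (Coalgebra.Repr.arbitrary k (Rx.left s)).index,
                ψ ((Coalgebra.Repr.arbitrary k (Rx.left s)).left u) •
                  (∑ i, e.coord i ((Coalgebra.Repr.arbitrary k (Rx.left s)).right u) •
                    (Rx.right s * (Sinv (k := k) (e i) * h))) := by
              rw [Finset.sum_comm]
              exact Finset.sum_congr rfl fun u _ => by rw [Finset.smul_sum]
          _ = ∑ u ∈ (Coalgebra.Repr.arbitrary k (Rx.left s)).index,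
                T3 ((Coalgebra.Repr.arbitrary k (Rx.left s)).left u)
                  ((Coalgebra.Repr.arbitrary k (Rx.left s)).right u) (Rx.right s) := by
              refine Finset.sum_congr rfl fun u _ => ?_
              rw [hT3apply]
              congr 1
              have := db1 e ((LinearMap.mulLeft k (Rx.right s))
                ∘ₗ (LinearMap.mulRight k h) ∘ₗ (Sinv (k := k)))
                ((Coalgebra.Repr.arbitrary k (Rx.left s)).right u)
              simpa only [LinearMap.comp_apply, LinearMap.mulRight_apply,
                LinearMap.mulLeft_apply] using this
    _ = ∑ s ∈ Rx.index, ∑ v ∈ (Coalgebra.Repr.arbitrary k (Rx.right s)).index,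
          T3 (Rx.left s) ((Coalgebra.Repr.arbitrary k (Rx.right s)).left v)
            ((Coalgebra.Repr.arbitrary k (Rx.right s)).right v) :=
        coassoc_transport3 T3 Rx (fun s => Coalgebra.Repr.arbitrary k (Rx.left s))
          (fun s => Coalgebra.Repr.arbitrary k (Rx.right s))
    _ = ∑ s ∈ Rx.index, (Coalgebra.counit (R := k) (Rx.right s) * ψ (Rx.left s)) • h := by
        refine Finset.sum_congr rfl fun s _ => ?_
        calc ∑ v ∈ (Coalgebra.Repr.arbitrary k (Rx.right s)).index,
              T3 (Rx.left s) ((Coalgebra.Repr.arbitrary k (Rx.right s)).left v)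
                ((Coalgebra.Repr.arbitrary k (Rx.right s)).right v)
            = ψ (Rx.left s) •
                ((∑ v ∈ (Coalgebra.Repr.arbitrary k (Rx.right s)).index,
                  (Coalgebra.Repr.arbitrary k (Rx.right s)).right v
                    * Sinv (k := k) ((Coalgebra.Repr.arbitrary k (Rx.right s)).left v)) * h) := by
              rw [Finset.sum_mul, Finset.smul_sum]
              refine Finset.sum_congr rfl fun v _ => ?_
              rw [hT3apply, mul_assoc]
          _ = (Coalgebra.counit (R := k) (Rx.right s) * ψ (Rx.left s)) • h := by
              rw [sum_mul_Sinv_eq (Coalgebra.Repr.arbitrary k (Rx.right s)),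
                smul_mul_assoc, one_mul, smul_smul, mul_comm]
    _ = ψ x • h := by
        rw [← Finset.sum_smul]
        congr 1
        calc ∑ s ∈ Rx.index, Coalgebra.counit (R := k) (Rx.right s) * ψ (Rx.left s)
            = ψ (∑ s ∈ Rx.index, Coalgebra.counit (R := k) (Rx.right s) • Rx.left s) := by
              rw [map_sum]
              exact Finset.sum_congr rfl fun s _ => by rw [map_smul, smul_eq_mul]
          _ = ψ x := by rw [sum_smul_counit Rx]

end RCinverseMirror
section Assembly

variable {k A : Type} [Field k] [Ring A] [HopfAlgebra k A]
variable [FiniteDimensional k A]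
variable {ι : Type} [Fintype ι]

open Coalgebra HopfAlgebra

lemma RC'_comp_RC (e : Module.Basis ι k A) : (RC' e) ∘ₗ (RC e) = LinearMap.id := by
  have H : (dualTensorHom k A A) ∘ₗ ((RC' e) ∘ₗ (RC e)) = dualTensorHom k A A := by
    apply TensorProduct.ext'
    intro ψ h
    refine LinearMap.ext fun x => ?_
    simp only [LinearMap.comp_apply]
    rw [dth_RC'_RC e ψ h x, dualTensorHom_apply]
  refine LinearMap.ext fun t => ?_
  apply dth_injective e
  have := LinearMap.congr_fun H t
  simpa only [LinearMap.comp_apply, LinearMap.id_apply] using this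

lemma RC_comp_RC' (e : Module.Basis ι k A) : (RC e) ∘ₗ (RC' e) = LinearMap.id := by
  have H : (dualTensorHom k A A) ∘ₗ ((RC e) ∘ₗ (RC' e)) = dualTensorHom k A A := by
    apply TensorProduct.ext'
    intro ψ h
    refine LinearMap.ext fun x => ?_
    simp only [LinearMap.comp_apply]
    rw [dth_RC_RC' e ψ h x, dualTensorHom_apply]
  refine LinearMap.ext fun t => ?_
  apply dth_injective e
  have := LinearMap.congr_fun H t
  simpa only [LinearMap.comp_apply, LinearMap.id_apply] using this

lemma RC_bijective (e : Module.Basis ι k A) : Function.Bijective (RC e) := by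
  refine Function.bijective_iff_has_inverse.mpr ⟨RC' e, fun t => ?_, fun t => ?_⟩
  · have := LinearMap.congr_fun (RC'_comp_RC e) t
    simpa only [LinearMap.comp_apply, LinearMap.id_apply] using this
  · have := LinearMap.congr_fun (RC_comp_RC' e) t
    simpa only [LinearMap.comp_apply, LinearMap.id_apply] using this

lemma heisRep_tmul (ψ : Module.Dual k A) (h : A) :
    heisRep (ψ ⊗ₜ[k] h) = heisOp ψ h := rfl

lemma heisOp_apply (ψ φ : Module.Dual k A) (h : A) :
    heisOp ψ h φ = conv ψ (φ ∘ₗ LinearMap.mulRight k h) := rfl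

lemma heisRep_eq_jmap_RC (e : Module.Basis ι k A) :
    (heisRep : (Module.Dual k A) ⊗[k] A →ₗ[k] Module.End k (Module.Dual k A))
      = jmap ∘ₗ RC e := by
  apply TensorProduct.ext'
  intro ψ h
  refine LinearMap.ext fun φ => LinearMap.ext fun x => ?_
  rw [LinearMap.comp_apply, heisRep_tmul, heisOp_apply, RC_tmul, map_sum,
    LinearMap.sum_apply, LinearMap.sum_apply]
  set Rx := Coalgebra.Repr.arbitrary k x with hRx
  calc conv ψ (φ ∘ₗ LinearMap.mulRight k h) x
      = ∑ s ∈ Rx.index, ψ (Rx.left s) * φ (Rx.right s * h) := by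
        rw [conv_apply_repr _ _ Rx]
        exact Finset.sum_congr rfl fun s _ => by
          rw [LinearMap.comp_apply, LinearMap.mulRight_apply]
    _ = ∑ i, (jmap (conv ψ (e.coord i) ⊗ₜ[k] (e i * h)) φ) x := by
        have key : ∀ i, (jmap (conv ψ (e.coord i) ⊗ₜ[k] (e i * h)) φ) x
            = ∑ s ∈ Rx.index, e.coord i (Rx.right s) •
                (ψ (Rx.left s) • φ (e i * h)) := by
          intro i
          rw [jmap_tmul, LinearMap.smul_apply, conv_apply_repr _ _ Rx, smul_eq_mul,
            Finset.mul_sum]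
          refine Finset.sum_congr rfl fun s _ => ?_
          simp only [smul_eq_mul]
          ring
        rw [Finset.sum_congr rfl fun i _ => key i, Finset.sum_comm]
        refine Finset.sum_congr rfl fun s _ => ?_
        have := db1 e (ψ (Rx.left s) • (φ ∘ₗ LinearMap.mulRight k h)) (Rx.right s)
        simp only [LinearMap.smul_apply, LinearMap.comp_apply, LinearMap.mulRight_apply,
          smul_eq_mul] at this
        simp only [smul_eq_mul]
        exact this.symm

lemma heisRep_bijective :
    Function.Bijective (heisRep (k := k) (A := A)) := by
  classical
  set e := Module.Basis.ofVectorSpace k A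
  rw [heisRep_eq_jmap_RC e, LinearMap.coe_comp]
  exact (jmap_bijective e).comp (RC_bijective e)

lemma heisRep_counit_apply (h : A) (φ : Module.Dual k A) :
    heisRep ((Coalgebra.counit (R := k) : Module.Dual k A) ⊗ₜ[k] h) φ
      = φ ∘ₗ LinearMap.mulRight k h := by
  rw [heisRep_tmul, heisOp_apply, conv_counit_left]

lemma heisRep_one_apply (ψ φ : Module.Dual k A) :
    heisRep (ψ ⊗ₜ[k] (1 : A)) φ = conv ψ φ := by
  rw [heisRep_tmul, heisOp_apply, LinearMap.mulRight_one, LinearMap.comp_id]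

end Assembly
/-- The Heisenberg double `H(O(H))` acts faithfully on `H*` via
`ψ ▷ φ = ψφ` and `h ▷ φ = φ(?h)`, and is isomorphic as an algebra to `End(H*)`:
the representation map `Φ` is bijective, restricts on the two tensor factors to the
convolution action of `O(H)` and the right-translation action of `H`, and satisfies
the Heisenberg exchange rule `hψ = ψ(?h')h''`. -/
theorem heisenberg_double_is_matrix_algebra [FiniteDimensional k A] :
    Function.Bijective (heisRep (k := k) (A := A))
    ∧ (∀ (ψ φ : Module.Dual k A), heisRep (ψ ⊗ₜ[k] (1 : A)) φ = conv ψ φ)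
    ∧ (∀ (h : A) (φ : Module.Dual k A),
        heisRep ((Coalgebra.counit (R := k) : Module.Dual k A) ⊗ₜ[k] h) φ
          = φ ∘ₗ LinearMap.mulRight k h)
    ∧ (∀ (h : A) (ψ : Module.Dual k A) (ι : Type) (s : Finset ι) (h1 h2 : ι → A),
        Coalgebra.comul (R := k) h = ∑ j ∈ s, h1 j ⊗ₜ[k] h2 j →
        heisRep ((Coalgebra.counit (R := k) : Module.Dual k A) ⊗ₜ[k] h)
            * heisRep (ψ ⊗ₜ[k] (1 : A))
          = ∑ j ∈ s, heisRep ((ψ ∘ₗ LinearMap.mulRight k (h1 j)) ⊗ₜ[k] h2 j)) := by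
  classical
  refine ⟨heisRep_bijective, fun ψ φ => heisRep_one_apply ψ φ,
    fun h φ => heisRep_counit_apply h φ, ?_⟩
  intro h ψ ι' s h1 h2 hcom
  set Rh : Coalgebra.Repr k h ι' := ⟨s, h1, h2, hcom.symm⟩ with hRh
  refine LinearMap.ext fun φ => LinearMap.ext fun x => ?_
  rw [Module.End.mul_apply, heisRep_one_apply, heisRep_counit_apply,
    LinearMap.comp_apply, LinearMap.mulRight_apply]
  set Rx := Coalgebra.Repr.arbitrary k x with hRx
  rw [conv_apply_repr _ _ (Coalgebra.Repr.mulRepr Rx Rh)]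
  simp only [Coalgebra.Repr.mulRepr, hRh]
  rw [Finset.sum_product, LinearMap.sum_apply, LinearMap.sum_apply, Finset.sum_comm]
  refine Finset.sum_congr rfl fun t _ => ?_
  rw [heisRep_tmul, heisOp_apply, conv_apply_repr _ _ Rx]
  refine Finset.sum_congr rfl fun s' _ => ?_
  simp only [LinearMap.comp_apply, LinearMap.mulRight_apply]
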